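/- arXiv:2404.09741 — 6 statements merged into one kernel-verified Lean document; each statement's English description precedes it below -/
import Mathlib

section
/- Let Ω be a finite set with k := |Ω| > 1, let M ⊆ Δ^k be nonempty, and let m = (m_1, m_2, …) be any sequence with each m_i ∈ M. Then the set CP(n ↦ (1/n)∑_{i=1}^n m_i) of cluster points of the Cesàro averages is a nonempty closed connected subset of the closed convex hull of M. -/
open MeasureTheory Filter Topology

noncomputable section

/-- The set of probability vectors over a finite set `Ω`, i.e. the standard simplex
inside the Euclidean space `ℝ^Ω`. -/
def probVec (Ω : Type*) [Fintype Ω] : Set (EuclideanSpace ℝ Ω) :=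
  {p | (∀ x, 0 ≤ p x) ∧ ∑ x, p x = 1}

/-- The relative-frequency vector of the first `n` terms of `ω`. -/
def relFreq {Ω : Type*} [Fintype Ω] [DecidableEq Ω] (ω : ℕ → Ω) (n : ℕ) :
    EuclideanSpace ℝ Ω :=
  WithLp.toLp 2 (fun x => (((Finset.range n).filter fun i => ω i = x).card : ℝ) / n)

/-- The set of cluster points of a sequence in a topological space. -/
def clusterPts {X : Type*} [TopologicalSpace X] (a : ℕ → X) : Set X :=
  {c | MapClusterPt c atTop a}

/-- Cesàro averages of a sequence of vectors. -/
def cesaro {Ω : Type*} [Fintype Ω] (m : ℕ → EuclideanSpace ℝ Ω) (n : ℕ) :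
    EuclideanSpace ℝ Ω :=
  (n : ℝ)⁻¹ • ∑ i ∈ Finset.range n, m i

/-- `μ` is the infinite (Ionescu-Tulcea) independent product of the probability vectors `m i`,
characterized by its values on cylinder sets. -/
def IsIT {Ω : Type*} [Fintype Ω] [MeasurableSpace Ω] (m : ℕ → EuclideanSpace ℝ Ω)
    (μ : Measure (ℕ → Ω)) : Prop :=
  ∀ (n : ℕ) (x : Fin n → Ω),
    μ {ω | ∀ i : Fin n, ω (i : ℕ) = x i} = ∏ i : Fin n, ENNReal.ofReal (m i.val (x i))

end

open Metric

/-- If a sequence is eventually in a compact set `K` and frequently in a closed set `D`,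
then it has a cluster point in `D`. -/
lemma aux_cluster {X : Type*} [TopologicalSpace X] {a : ℕ → X} {K D : Set X}
    (hK : IsCompact K) (ha : ∀ᶠ n in atTop, a n ∈ K) (hD : IsClosed D)
    (hf : ∃ᶠ n in atTop, a n ∈ D) : ∃ c, c ∈ D ∧ MapClusterPt c atTop a := by
  haveI hne : (Filter.map a atTop ⊓ 𝓟 D).NeBot := by
    rw [Filter.inf_principal_neBot_iff]
    intro U hU
    rw [Filter.mem_map] at hU
    obtain ⟨n, hn1, hn2⟩ := (hf.and_eventually hU).exists
    exact ⟨a n, hn2, hn1⟩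
  have hle : Filter.map a atTop ⊓ 𝓟 D ≤ 𝓟 K :=
    le_trans inf_le_left (Filter.le_principal_iff.mpr ha)
  obtain ⟨c, _, hc⟩ := hK.exists_clusterPt hle
  refine ⟨c, ?_, hc.mono inf_le_left⟩
  rw [← hD.closure_eq]
  exact mem_closure_iff_clusterPt.mpr (hc.mono inf_le_right)

lemma probVec_norm_le {Ω : Type*} [Fintype Ω] {p : EuclideanSpace ℝ Ω}
    (hp : p ∈ probVec Ω) : ‖p‖ ≤ 1 := by
  obtain ⟨h0, h1⟩ := hp
  rw [EuclideanSpace.norm_eq]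
  rw [show (1:ℝ) = Real.sqrt 1 by simp]
  apply Real.sqrt_le_sqrt
  calc ∑ x, ‖p x‖ ^ 2 ≤ ∑ x, p x := by
        apply Finset.sum_le_sum
        intro x _
        rw [Real.norm_eq_abs, sq_abs]
        have hle : p x ≤ 1 := by
          rw [← h1]
          exact Finset.single_le_sum (fun i _ => h0 i) (Finset.mem_univ x)
        nlinarith [h0 x]
    _ = 1 := h1

lemma cesaro_mem {Ω : Type*} [Fintype Ω] {M : Set (EuclideanSpace ℝ Ω)}
    {m : ℕ → EuclideanSpace ℝ Ω} (hm : ∀ i, m i ∈ M) {n : ℕ} (hn : 1 ≤ n) :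
    cesaro m n ∈ convexHull ℝ M := by
  have hn' : (n : ℝ) ≠ 0 := Nat.cast_ne_zero.mpr (by omega)
  have : cesaro m n = ∑ i ∈ Finset.range n, (n : ℝ)⁻¹ • m i := by
    rw [cesaro, Finset.smul_sum]
  rw [this]
  apply (convex_convexHull ℝ M).sum_mem
  · intro i _; positivity
  · rw [Finset.sum_const, Finset.card_range, nsmul_eq_mul, mul_inv_cancel₀ hn']
  · exact fun i _ => subset_convexHull ℝ M (hm i)

lemma cesaro_step {Ω : Type*} [Fintype Ω] {m : ℕ → EuclideanSpace ℝ Ω}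
    (hb : ∀ i, ‖m i‖ ≤ 1) {n : ℕ} (hn : 1 ≤ n) :
    dist (cesaro m (n + 1)) (cesaro m n) ≤ 2 / n := by
  have hx : (1:ℝ) ≤ (n:ℝ) := by exact_mod_cast hn
  have hx0 : (0:ℝ) < n := by linarith
  have hS : ‖∑ i ∈ Finset.range n, m i‖ ≤ n := by
    calc ‖∑ i ∈ Finset.range n, m i‖ ≤ ∑ i ∈ Finset.range n, ‖m i‖ :=
          norm_sum_le _ _
      _ ≤ ∑ _i ∈ Finset.range n, (1:ℝ) := Finset.sum_le_sum fun i _ => hb i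
      _ = n := by simp
  have hkey : cesaro m (n+1) - cesaro m n
      = (((n:ℝ)+1)⁻¹ - (n:ℝ)⁻¹) • (∑ i ∈ Finset.range n, m i)
        + ((n:ℝ)+1)⁻¹ • m n := by
    simp only [cesaro, Finset.sum_range_succ]
    push_cast
    module
  rw [dist_eq_norm, hkey]
  have h1 : ‖(((n:ℝ)+1)⁻¹ - (n:ℝ)⁻¹) • (∑ i ∈ Finset.range n, m i)‖
      ≤ ((n:ℝ)⁻¹ - ((n:ℝ)+1)⁻¹) * n := by
    rw [norm_smul, Real.norm_eq_abs, abs_of_nonpos (by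
      have : ((n:ℝ)+1)⁻¹ ≤ (n:ℝ)⁻¹ := by
        apply inv_anti₀ hx0; linarith
      linarith)]
    have : -((((n:ℝ)+1)⁻¹ - (n:ℝ)⁻¹)) = (n:ℝ)⁻¹ - ((n:ℝ)+1)⁻¹ := by ring
    rw [this]
    apply mul_le_mul_of_nonneg_left hS
    have : ((n:ℝ)+1)⁻¹ ≤ (n:ℝ)⁻¹ := by apply inv_anti₀ hx0; linarith
    linarith
  have h2 : ‖((n:ℝ)+1)⁻¹ • m n‖ ≤ ((n:ℝ)+1)⁻¹ := by
    rw [norm_smul, Real.norm_eq_abs, abs_of_pos (by positivity)]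
    calc ((n:ℝ)+1)⁻¹ * ‖m n‖ ≤ ((n:ℝ)+1)⁻¹ * 1 :=
          mul_le_mul_of_nonneg_left (hb n) (by positivity)
      _ = ((n:ℝ)+1)⁻¹ := by ring
  calc ‖_ + _‖ ≤ ((n:ℝ)⁻¹ - ((n:ℝ)+1)⁻¹) * n + ((n:ℝ)+1)⁻¹ :=
        le_trans (norm_add_le _ _) (add_le_add h1 h2)
    _ ≤ 2 / n := by
        rw [div_eq_mul_inv]
        have h3 : (0:ℝ) < (n:ℝ)+1 := by linarith
        field_simp
        ring_nf
        nlinarith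

/-- For any sequence taking values in a nonempty `M ⊆ Δ^k`, the set of cluster
points of its Cesàro averages is a nonempty closed connected subset of the closed convex hull
of `M`. -/
theorem stmt3 {Ω : Type*} [Fintype Ω] (hcard : 1 < Fintype.card Ω)
    (M : Set (EuclideanSpace ℝ Ω)) (hM : M.Nonempty) (hMsub : M ⊆ probVec Ω)
    (m : ℕ → EuclideanSpace ℝ Ω) (hm : ∀ i, m i ∈ M) :
    (clusterPts (cesaro m)).Nonempty ∧ IsClosed (clusterPts (cesaro m)) ∧
      IsConnected (clusterPts (cesaro m)) ∧
      clusterPts (cesaro m) ⊆ closure (convexHull ℝ M) := by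
  classical
  set a := cesaro m with ha_def
  set K := closure (convexHull ℝ M) with hK_def
  have hKcomp : IsCompact K := by
    apply isCompact_of_isClosed_isBounded isClosed_closure
    apply Bornology.IsBounded.closure
    rw [isBounded_convexHull]
    have hsub : M ⊆ Metric.closedBall 0 1 := fun p hp => by
      rw [Metric.mem_closedBall, dist_zero_right]; exact probVec_norm_le (hMsub hp)
    exact (Metric.isBounded_closedBall).subset hsub
  have haK : ∀ᶠ n in atTop, a n ∈ K := by
    filter_upwards [eventually_ge_atTop 1] with n hn
    exact subset_closure (cesaro_mem hm hn)
  have hb : ∀ i, ‖m i‖ ≤ 1 := fun i => probVec_norm_le (hMsub (hm i))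
  have hstep : ∀ ρ : ℝ, 0 < ρ → ∀ᶠ n in atTop, dist (a (n+1)) (a n) < ρ := by
    intro ρ hρ
    have hT := (tendsto_const_div_atTop_nhds_zero_nat 2).eventually_lt_const hρ
    filter_upwards [hT, eventually_ge_atTop 1] with n h1 h2
    exact lt_of_le_of_lt (cesaro_step hb h2) h1
  -- nonempty
  obtain ⟨c0, hc0K, hc0⟩ := aux_cluster hKcomp haK isClosed_closure haK.frequently
  have hLne : (clusterPts a).Nonempty := ⟨c0, hc0⟩
  -- closed
  have hLclosed : IsClosed (clusterPts a) := isClosed_setOf_clusterPt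
  -- subset
  have hsub : clusterPts a ⊆ K := by
    intro c hc
    have : ClusterPt c (Filter.map a atTop) := hc
    rw [hK_def, ← isClosed_closure.closure_eq]
    exact mem_closure_iff_clusterPt.mpr
      (this.mono (Filter.le_principal_iff.mpr haK))
  -- connected
  have hconn : IsConnected (clusterPts a) := by
    refine ⟨hLne, ?_⟩
    intro U V hU hV hUV hUne hVne
    by_contra hcon
    rw [Set.not_nonempty_iff_eq_empty] at hcon
    set A := clusterPts a \ V with hA_def
    set B := clusterPts a \ U with hB_def
    have hAclosed : IsClosed A := hLclosed.sdiff hV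
    have hBclosed : IsClosed B := hLclosed.sdiff hU
    have hAcomp : IsCompact A :=
      hKcomp.of_isClosed_subset hAclosed ((Set.diff_subset).trans hsub)
    have hAne : A.Nonempty := by
      obtain ⟨x, hxL, hxU⟩ := hUne
      refine ⟨x, hxL, fun hxV => ?_⟩
      have : x ∈ clusterPts a ∩ (U ∩ V) := ⟨hxL, hxU, hxV⟩
      rw [hcon] at this; exact this
    have hBne : B.Nonempty := by
      obtain ⟨x, hxL, hxV⟩ := hVne
      refine ⟨x, hxL, fun hxU => ?_⟩
      have : x ∈ clusterPts a ∩ (U ∩ V) := ⟨hxL, hxU, hxV⟩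
      rw [hcon] at this; exact this
    have hdisj : Disjoint A B := by
      rw [Set.disjoint_left]
      rintro x ⟨hxL, hxV⟩ ⟨-, hxU⟩
      rcases hUV hxL with h | h
      · exact hxU h
      · exact hxV h
    obtain ⟨δ, hδ, hdis⟩ := hdisj.exists_thickenings hAcomp hBclosed
    set TA := thickening (δ/2) A with hTA_def
    set TB := thickening (δ/2) B with hTB_def
    have hmonoA : TA ⊆ thickening δ A := thickening_mono (by linarith) A
    have hmonoB : TB ⊆ thickening δ B := thickening_mono (by linarith) B
    -- frequent visits to TA and TB
    have freqA : ∃ᶠ n in atTop, a n ∈ TA := by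
      obtain ⟨x0, hx0⟩ := hAne
      have hx0L : MapClusterPt x0 atTop a := hx0.1
      exact mapClusterPt_iff_frequently.mp hx0L TA
        (isOpen_thickening.mem_nhds (self_subset_thickening (by linarith) A hx0))
    have freqB : ∃ᶠ n in atTop, a n ∈ TB := by
      obtain ⟨x0, hx0⟩ := hBne
      have hx0L : MapClusterPt x0 atTop a := hx0.1
      exact mapClusterPt_iff_frequently.mp hx0L TB
        (isOpen_thickening.mem_nhds (self_subset_thickening (by linarith) B hx0))
    obtain ⟨N0, hN0⟩ := eventually_atTop.mp (hstep (δ/2) (by linarith))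
    -- frequently outside both TA and TB
    have freqD : ∃ᶠ p in atTop, a p ∈ TAᶜ ∩ TBᶜ := by
      rw [frequently_atTop]
      intro N
      obtain ⟨n, hnge, hnTA⟩ := frequently_atTop.mp freqA (max N N0)
      obtain ⟨n', hn'ge, hn'TB⟩ := frequently_atTop.mp freqB (n+1)
      have hex : ∃ q, a (n + 1 + q) ∉ TA := by
        refine ⟨n' - (n+1), fun h => ?_⟩
        rw [show n + 1 + (n' - (n+1)) = n' by omega] at h
        exact Set.disjoint_left.mp hdis (hmonoA h) (hmonoB hn'TB)
      set q0 := Nat.find hex with hq0_def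
      have hpTA : a (n + 1 + q0) ∉ TA := Nat.find_spec hex
      have hprev : a (n + q0) ∈ TA := by
        rcases Nat.eq_zero_or_pos q0 with h | h
        · rw [h]; simpa using hnTA
        · have hmin := Nat.find_min hex (show q0 - 1 < q0 by omega)
          rw [show n + 1 + (q0 - 1) = n + q0 by omega] at hmin
          exact not_not.mp hmin
      have hdist : dist (a (n + q0 + 1)) (a (n + q0)) < δ/2 :=
        hN0 _ (le_trans (le_max_right N N0) (by omega))
      have hpA : a (n + 1 + q0) ∈ thickening δ A := by
        rw [mem_thickening_iff_infDist_lt hAne]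
        have h1 : infDist (a (n + q0)) A < δ/2 :=
          (mem_thickening_iff_infDist_lt hAne).mp hprev
        calc infDist (a (n + 1 + q0)) A
            ≤ infDist (a (n + q0)) A + dist (a (n + 1 + q0)) (a (n + q0)) :=
              infDist_le_infDist_add_dist
          _ < δ/2 + δ/2 := by
              rw [show n + 1 + q0 = n + q0 + 1 by omega]
              exact add_lt_add_of_lt_of_le h1 hdist.le |>.trans_le (by linarith)
          _ = δ := by ring
      have hpTB : a (n + 1 + q0) ∉ TB := fun h =>
        Set.disjoint_left.mp hdis hpA (hmonoB h)
      exact ⟨n + 1 + q0, le_trans (le_max_left N N0) (by omega), hpTA, hpTB⟩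
    have hDclosed : IsClosed (TAᶜ ∩ TBᶜ) :=
      (isOpen_thickening.isClosed_compl).inter (isOpen_thickening.isClosed_compl)
    obtain ⟨c, hcD, hcL⟩ := aux_cluster hKcomp haK hDclosed freqD
    have hcL' : c ∈ clusterPts a := hcL
    rcases hUV hcL' with hcU | hcV
    · have hcnV : c ∉ V := fun hcV => by
        have : c ∈ clusterPts a ∩ (U ∩ V) := ⟨hcL', hcU, hcV⟩
        rw [hcon] at this; exact this
      exact hcD.1 (self_subset_thickening (by linarith) A ⟨hcL', hcnV⟩)
    · have hcnU : c ∉ U := fun hcU => by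
        have : c ∈ clusterPts a ∩ (U ∩ V) := ⟨hcL', hcU, hcV⟩
        rw [hcon] at this; exact this
      exact hcD.2 (self_subset_thickening (by linarith) B ⟨hcL', hcnU⟩)
  exact ⟨hLne, hLclosed, hconn, hsub⟩
end

section
/- Let Ω be a finite set with k := |Ω| > 1 and let N ⊆ Δ^k. Then there exists a sequence ω = (ω_1, ω_2, …) ∈ Ω^ℕ such that CP(n ↦ r_n(ω)) = N if and only if N is a nonempty closed connected subset of Δ^k. -/
open MeasureTheory Filter Topology

noncomputable section Stmt6AuxAll
namespace Stmt6Aux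
set_option linter.unusedSectionVars false
set_option linter.unusedTactic false
open Filter Topology Metric

section MS1
variable {X : Type*} [PseudoMetricSpace X]



theorem mapClusterPt_iff_dist {p : X} {a : ℕ → X} :
    MapClusterPt p atTop a ↔ ∀ ε > 0, ∃ᶠ n in atTop, dist (a n) p < ε := by
  rw [mapClusterPt_iff_frequently]
  constructor
  · intro h ε hε
    exact (h (Metric.ball p ε) (Metric.ball_mem_nhds p hε)).mono fun n hn => by
      simpa [Metric.mem_ball] using hn
  · intro h s hs
    obtain ⟨ε, hε, hsub⟩ := Metric.mem_nhds_iff.mp hs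
    exact (h ε hε).mono fun n hn => hsub (by simpa [Metric.mem_ball] using hn)

theorem exists_mapClusterPt_of_frequently {K : Set X} {a : ℕ → X} (hK : IsCompact K)
    (h : ∃ᶠ n in atTop, a n ∈ K) : ∃ z ∈ K, MapClusterPt z atTop a := by
  have hne : (atTop ⊓ 𝓟 {n | a n ∈ K}).NeBot := by
    rwa [← frequently_iff_neBot] at *
  obtain ⟨z, hzK, hz⟩ := hK.exists_mapClusterPt (f := atTop ⊓ 𝓟 {n | a n ∈ K}) (u := a)
    (by
      refine le_trans (map_mono inf_le_right) ?_
      rw [map_principal]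
      exact principal_mono.mpr (by rintro _ ⟨n, hn, rfl⟩; exact hn))
  exact ⟨z, hzK, hz.mono inf_le_left⟩




theorem mapClusterPt_of_close {a b : ℕ → X}
    (hab : Tendsto (fun n => dist (a n) (b n)) atTop (𝓝 0)) {p : X}
    (hp : MapClusterPt p atTop a) : MapClusterPt p atTop b := by
  rw [mapClusterPt_iff_dist] at hp ⊢
  intro ε hε
  have h1 : ∀ᶠ n in atTop, dist (a n) (b n) < ε / 2 :=
    hab.eventually (gt_mem_nhds (by positivity))
  refine ((hp (ε / 2) (by positivity)).and_eventually h1).mono ?_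
  intro n ⟨h2, h3⟩
  calc dist (b n) p ≤ dist (b n) (a n) + dist (a n) p := dist_triangle _ _ _
    _ < ε / 2 + ε / 2 := by rw [dist_comm]; exact add_lt_add h3 h2
    _ = ε := by ring

theorem clusterPts_congr {a b : ℕ → X}
    (hab : Tendsto (fun n => dist (a n) (b n)) atTop (𝓝 0)) :
    {c | MapClusterPt c atTop a} = {c | MapClusterPt c atTop b} := by
  have hba : Tendsto (fun n => dist (b n) (a n)) atTop (𝓝 0) := by
    simpa [dist_comm] using hab
  ext c
  exact ⟨fun h => mapClusterPt_of_close hab h, fun h => mapClusterPt_of_close hba h⟩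

/-- In a preconnected set, any two points are joined by an ε-chain inside the set. -/
theorem chain_of_preconnected {N : Set X} (hN : IsPreconnected N) {u v : X}
    (hu : u ∈ N) (hv : v ∈ N) {ε : ℝ} (hε : 0 < ε) :
    Relation.ReflTransGen (fun a b => b ∈ N ∧ dist a b < ε) u v := by
  set r := fun a b : X => b ∈ N ∧ dist a b < ε with hr
  set S := {w | w ∈ N ∧ Relation.ReflTransGen r u w} with hS
  set U := ⋃ w ∈ S, Metric.ball w ε with hU
  set V := ⋃ w ∈ N \ S, Metric.ball w ε with hV
  have hUopen : IsOpen U := isOpen_biUnion fun _ _ => Metric.isOpen_ball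
  have hVopen : IsOpen V := isOpen_biUnion fun _ _ => Metric.isOpen_ball
  have hcover : N ⊆ U ∪ V := by
    intro w hw
    by_cases h : w ∈ S
    · exact Or.inl (Set.mem_biUnion h (Metric.mem_ball_self hε))
    · exact Or.inr (Set.mem_biUnion ⟨hw, h⟩ (Metric.mem_ball_self hε))
  have hxU : ∀ x ∈ U, x ∈ N → x ∈ S := by
    intro x hx hxN
    obtain ⟨w, hwS, hxw⟩ := Set.mem_iUnion₂.mp hx
    exact ⟨hxN, hwS.2.tail ⟨hxN, by rw [dist_comm]; exact Metric.mem_ball.mp hxw⟩⟩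
  have hVempty : N ∩ V = ∅ := by
    by_contra hne
    rw [← Ne, ← Set.nonempty_iff_ne_empty] at hne
    have hUne : (N ∩ U).Nonempty :=
      ⟨u, hu, Set.mem_biUnion ⟨hu, Relation.ReflTransGen.refl⟩ (Metric.mem_ball_self hε)⟩
    obtain ⟨x, hxN, hxU', hxV⟩ := hN U V hUopen hVopen hcover hUne hne
    have hxS : x ∈ S := hxU x hxU' hxN
    obtain ⟨w, hwNS, hxw⟩ := Set.mem_iUnion₂.mp hxV
    exact hwNS.2 ⟨hwNS.1, hxS.2.tail ⟨hwNS.1, Metric.mem_ball.mp hxw⟩⟩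
  have hvS : v ∈ S := by
    by_contra h
    have : v ∈ N ∩ V := ⟨hv, Set.mem_biUnion ⟨hv, h⟩ (Metric.mem_ball_self hε)⟩
    rw [hVempty] at this
    exact this
  exact hvS.2


end MS1

section MS2
variable {X : Type*} [MetricSpace X]
section Fwd

variable {K : Set X} {a : ℕ → X}

theorem isClosed_clusterPts (a : ℕ → X) : IsClosed {c | MapClusterPt c atTop a} :=
  isClosed_setOf_clusterPt (f := map a atTop)

theorem clusterPts_subset (hK : IsClosed K) (hmem : ∀ n, 1 ≤ n → a n ∈ K) :
    {c | MapClusterPt c atTop a} ⊆ K := by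
  intro z hz
  by_contra hzK
  have h1 : ∃ᶠ n in atTop, a n ∈ Kᶜ :=
    (mapClusterPt_iff_frequently.mp hz) Kᶜ (hK.isOpen_compl.mem_nhds hzK)
  obtain ⟨n, hn1, hn2⟩ := (h1.and_eventually (eventually_ge_atTop 1)).exists
  exact hn1 (hmem n hn2)

theorem forward_lemma (hK : IsCompact K) (hmem : ∀ n, 1 ≤ n → a n ∈ K)
    (hstep : Tendsto (fun n => dist (a (n + 1)) (a n)) atTop (𝓝 0)) :
    IsConnected {c | MapClusterPt c atTop a} := by
  set L := {c | MapClusterPt c atTop a} with hLdef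
  have hLsub : L ⊆ K := clusterPts_subset hK.isClosed hmem
  have hLclosed : IsClosed L := isClosed_clusterPts a
  have hLne : L.Nonempty := by
    obtain ⟨z, _, hz⟩ := exists_mapClusterPt_of_frequently hK
      (((eventually_ge_atTop 1).mono hmem).frequently)
    exact ⟨z, hz⟩
  refine ⟨hLne, ?_⟩
  intro u v hu hv hcover ⟨p, hpL, hpu⟩ ⟨q, hqL, hqv⟩
  by_contra hcon
  rw [Set.not_nonempty_iff_eq_empty] at hcon
  -- disjoint closed pieces
  set A := L ∩ vᶜ with hA
  set B := L ∩ uᶜ with hB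
  have hxuv : ∀ x ∈ L, x ∈ u → x ∈ v → False := by
    intro x hx h1 h2
    have : x ∈ L ∩ (u ∩ v) := ⟨hx, h1, h2⟩
    simp [hcon] at this
  have hpA : p ∈ A := ⟨hpL, fun h2 => hxuv p hpL hpu h2⟩
  have hqB : q ∈ B := ⟨hqL, fun h1 => hxuv q hqL h1 hqv⟩
  have hABL : A ∪ B = L := by
    apply Set.eq_of_subset_of_subset
    · rintro x (⟨h, _⟩ | ⟨h, _⟩) <;> exact h
    · intro x hx
      rcases hcover hx with h1 | h2
      · exact Or.inl ⟨hx, fun h2 => hxuv x hx h1 h2⟩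
      · exact Or.inr ⟨hx, fun h1 => hxuv x hx h1 h2⟩
  have hAclosed : IsClosed A := hLclosed.inter hv.isClosed_compl
  have hBclosed : IsClosed B := hLclosed.inter hu.isClosed_compl
  have hAcomp : IsCompact A := hK.of_isClosed_subset hAclosed ((Set.inter_subset_left).trans hLsub)
  have hABdisj : Disjoint A B := by
    rw [Set.disjoint_iff]
    rintro x ⟨⟨hxL, hxv⟩, ⟨_, hxu⟩⟩
    rcases hcover hxL with h | h
    · exact hxu h
    · exact hxv h
  obtain ⟨δ, hδ, hdisj⟩ := hABdisj.exists_thickenings hAcomp hBclosed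
  -- step size eventually < δ/4
  obtain ⟨N₀, hN₀⟩ := eventually_atTop.mp
    (hstep.eventually (gt_mem_nhds (by positivity : (0:ℝ) < δ / 4)))
  -- the crossing set
  set D := K ∩ (fun x => infDist x A) ⁻¹' (Set.Icc (δ / 2) (3 * δ / 4)) with hD
  have hDcomp : IsCompact D :=
    hK.inter_right ((isClosed_Icc).preimage (continuous_infDist_pt A))
  have hfreqD : ∃ᶠ n in atTop, a n ∈ D := by
    rw [frequently_atTop]
    intro M
    set M' := max M (N₀ + 1) with hM'
    -- find n ≥ M' with infDist (a n) A < δ/2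
    obtain ⟨n, hnM, hnp⟩ := frequently_atTop.mp
      ((mapClusterPt_iff_dist.mp hpL) (δ / 2) (by positivity)) M'
    have hfn : infDist (a n) A < δ / 2 := by
      calc infDist (a n) A ≤ dist (a n) p := infDist_le_dist_of_mem hpA
        _ < δ / 2 := hnp
    -- find m > n with infDist (a m) A ≥ δ/2
    obtain ⟨m, hmn, hmq⟩ := frequently_atTop.mp
      ((mapClusterPt_iff_dist.mp hqL) δ hδ) (n + 1)
    have hfm : δ / 2 ≤ infDist (a m) A := by
      have hmB : a m ∈ thickening δ B := by
        rw [mem_thickening_iff]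
        exact ⟨q, hqB, hmq⟩
      have : a m ∉ thickening δ A := fun h => (Set.disjoint_iff.mp hdisj ⟨h, hmB⟩)
      rw [mem_thickening_iff_infDist_lt ⟨p, hpA⟩] at this
      linarith [not_lt.mp this]
    have hex : ∃ j, n < j ∧ δ / 2 ≤ infDist (a j) A := ⟨m, hmn, hfm⟩
    set j := Nat.find hex with hj
    obtain ⟨hjn, hjf⟩ := Nat.find_spec hex
    have hj1 : n ≤ j - 1 ∧ j - 1 < j := by
      omega
    have hprev : infDist (a (j - 1)) A < δ / 2 := by
      rcases Nat.lt_or_ge n (j - 1) with h | h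
      · have := Nat.find_min hex hj1.2
        push_neg at this
        exact this h
      · have : j - 1 = n := le_antisymm h hj1.1
        rwa [this]
    have hjN₀ : N₀ ≤ j - 1 := by
      have : N₀ + 1 ≤ M' := le_max_right _ _
      omega
    have hstepj : dist (a (j - 1 + 1)) (a (j - 1)) < δ / 4 := hN₀ _ hjN₀
    have hjeq : j - 1 + 1 = j := by omega
    rw [hjeq] at hstepj
    have hjup : infDist (a j) A ≤ 3 * δ / 4 := by
      calc infDist (a j) A ≤ infDist (a (j - 1)) A + dist (a j) (a (j - 1)) :=
            infDist_le_infDist_add_dist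
        _ ≤ δ / 2 + δ / 4 := by
            have := dist_comm (a j) (a (j-1))
            nlinarith [hprev, hstepj, dist_nonneg (x := a j) (y := a (j-1))]
        _ ≤ 3 * δ / 4 := by linarith
    refine ⟨j, by omega, ?_, hjf, hjup⟩
    exact hmem j (by omega)
  obtain ⟨z, hzD, hz⟩ := exists_mapClusterPt_of_frequently hDcomp hfreqD
  have hzL : z ∈ L := hz
  obtain ⟨hzK, hzIcc⟩ := hzD
  rw [← hABL] at hzL
  rcases hzL with hzA | hzB
  · have h0 : infDist z A = 0 := infDist_zero_of_mem hzA
    simp only [Set.mem_preimage, Set.mem_Icc, h0] at hzIcc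
    linarith [hzIcc.1]
  · have h1 : z ∈ thickening δ B := self_subset_thickening hδ B hzB
    have h2 : z ∈ thickening δ A := by
      rw [mem_thickening_iff_infDist_lt ⟨p, hpA⟩]
      have := hzIcc.2
      simp only [Set.mem_preimage] at this
      linarith [hzIcc.2]
    exact Set.disjoint_iff.mp hdisj ⟨h2, h1⟩

end Fwd


end MS2

variable {Ω : Type*} [Fintype Ω] [DecidableEq Ω] [Nonempty Ω]

/-- Partial sums of coordinates of the target sequence. -/
def S (t : ℕ → EuclideanSpace ℝ Ω) (n : ℕ) (x : Ω) : ℝ := ∑ i ∈ Finset.range n, t i x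

/-- An element maximizing `f`. -/
def pick (f : Ω → ℝ) : Ω :=
  (Finset.exists_max_image Finset.univ f ⟨Classical.arbitrary Ω, Finset.mem_univ _⟩).choose

theorem pick_spec (f : Ω → ℝ) : ∀ y, f y ≤ f (pick f) := by
  obtain ⟨-, h⟩ := (Finset.exists_max_image Finset.univ f
    ⟨Classical.arbitrary Ω, Finset.mem_univ _⟩).choose_spec
  exact fun y => h y (Finset.mem_univ y)

/-- Greedy counts. -/
def cnt (t : ℕ → EuclideanSpace ℝ Ω) : ℕ → Ω → ℕ
  | 0 => fun _ => 0
  | n + 1 => fun x =>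
      cnt t n x + if pick (fun y => S t (n + 1) y - (cnt t n y : ℝ)) = x then 1 else 0

/-- The greedy sequence. -/
def omseq (t : ℕ → EuclideanSpace ℝ Ω) (n : ℕ) : Ω :=
  pick (fun y => S t (n + 1) y - (cnt t n y : ℝ))

theorem cnt_eq_card (t : ℕ → EuclideanSpace ℝ Ω) (n : ℕ) (x : Ω) :
    cnt t n x = ((Finset.range n).filter fun i => omseq t i = x).card := by
  induction n with
  | zero => simp [cnt]
  | succ n ih =>
    rw [Finset.range_add_one, Finset.filter_insert]
    by_cases h : omseq t n = x
    · rw [if_pos h, Finset.card_insert_of_notMem (by simp)]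
      simp only [cnt, omseq] at *
      rw [if_pos h, ih]
    · rw [if_neg h]
      simp only [cnt, omseq] at *
      rw [if_neg h, ih, add_zero]

theorem sum_cnt (t : ℕ → EuclideanSpace ℝ Ω) (n : ℕ) : ∑ x, cnt t n x = n := by
  induction n with
  | zero => simp [cnt]
  | succ n ih =>
    simp only [cnt, Finset.sum_add_distrib, ih, Finset.sum_ite_eq, Finset.mem_univ, if_true]

theorem sum_S (t : ℕ → EuclideanSpace ℝ Ω) (ht : ∀ i, t i ∈ probVec Ω) (n : ℕ) :
    ∑ x, S t n x = n := by
  unfold S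
  rw [Finset.sum_comm]
  simp only [(fun i => (ht i).2 : ∀ i, ∑ x, t i x = 1)]
  simp

theorem S_mono (t : ℕ → EuclideanSpace ℝ Ω) (ht : ∀ i, t i ∈ probVec Ω) (n : ℕ) (x : Ω) :
    S t n x ≤ S t (n + 1) x := by
  unfold S
  rw [Finset.sum_range_succ]
  linarith [(ht n).1 x]

theorem cnt_le (t : ℕ → EuclideanSpace ℝ Ω) (ht : ∀ i, t i ∈ probVec Ω) (n : ℕ) (x : Ω) :
    (cnt t n x : ℝ) ≤ S t n x + 1 := by
  induction n generalizing x with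
  | zero => simp [cnt, S]
  | succ n ih =>
    set f := fun y => S t (n + 1) y - (cnt t n y : ℝ) with hf
    have hsum : ∑ y, f y = 1 := by
      rw [hf]
      push_cast [Finset.sum_sub_distrib, sum_S t ht (n + 1)]
      rw [← Nat.cast_sum]
      rw [sum_cnt t n]
      push_cast
      ring
    have hfp : 0 < f (pick f) := by
      by_contra h
      push_neg at h
      have h2 : ∑ y, f y ≤ ∑ y, (0 : ℝ) :=
        Finset.sum_le_sum fun y _ => le_trans (pick_spec f y) h
      rw [hsum, Finset.sum_const, smul_zero] at h2
      linarith
    by_cases h : pick f = x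
    · have h' : (pick fun y => S t (n + 1) y - (cnt t n y : ℝ)) = x := h
      simp only [cnt, h', if_true, eq_self_iff_true]
      push_cast
      have : (cnt t n x : ℝ) = S t (n + 1) x - f x := by rw [hf]; ring
      rw [this, ← h]
      linarith [hfp]
    · have h' : ¬ (pick fun y => S t (n + 1) y - (cnt t n y : ℝ)) = x := h
      simp only [cnt, h', if_false, add_zero]
      exact le_trans (ih x) (by linarith [S_mono t ht n x])

theorem cnt_ge (t : ℕ → EuclideanSpace ℝ Ω) (ht : ∀ i, t i ∈ probVec Ω) (n : ℕ) (x : Ω) :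
    S t n x - (Fintype.card Ω - 1 : ℝ) ≤ (cnt t n x : ℝ) := by
  have h1 : ∑ y ∈ Finset.univ.erase x, (cnt t n y : ℝ) ≤
      ∑ y ∈ Finset.univ.erase x, (S t n y + 1) :=
    Finset.sum_le_sum fun y _ => cnt_le t ht n y
  have h2 : (cnt t n x : ℝ) + ∑ y ∈ Finset.univ.erase x, (cnt t n y : ℝ) = n := by
    have he := Finset.add_sum_erase Finset.univ (fun y => (cnt t n y : ℝ)) (Finset.mem_univ x)
    rw [he, ← Nat.cast_sum, sum_cnt t n]
  have h3 : S t n x + ∑ y ∈ Finset.univ.erase x, S t n y = n := by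
    have he := Finset.add_sum_erase Finset.univ (fun y => S t n y) (Finset.mem_univ x)
    rw [he, sum_S t ht n]
  have h4 : ∑ y ∈ Finset.univ.erase x, (S t n y + 1) =
      (∑ y ∈ Finset.univ.erase x, S t n y) + (Fintype.card Ω - 1 : ℝ) := by
    rw [Finset.sum_add_distrib]
    congr 1
    rw [Finset.sum_const, Finset.card_erase_of_mem (Finset.mem_univ x), Finset.card_univ]
    have h5 : 1 ≤ Fintype.card Ω := Fintype.card_pos
    rw [nsmul_eq_mul, mul_one, Nat.cast_sub h5, Nat.cast_one]
  linarith

theorem sum_apply_E (t : ℕ → EuclideanSpace ℝ Ω) (n : ℕ) (x : Ω) :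
    (∑ i ∈ Finset.range n, t i) x = ∑ i ∈ Finset.range n, t i x := by
  induction n with
  | zero => rfl
  | succ n ih => rw [Finset.sum_range_succ, Finset.sum_range_succ, ← ih]; rfl

theorem dist_relFreq_cesaro (t : ℕ → EuclideanSpace ℝ Ω) (ht : ∀ i, t i ∈ probVec Ω) :
    Tendsto (fun n => dist (relFreq (omseq t) n) (cesaro t n)) atTop (𝓝 0) := by
  set k := (Fintype.card Ω : ℝ) with hk
  have hk1 : 1 ≤ k := by
    rw [hk]
    exact_mod_cast Fintype.card_pos
  have hbound : ∀ n : ℕ, ∀ x : Ω, |relFreq (omseq t) n x - cesaro t n x| ≤ k / n := by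
    intro n x
    have hrf : relFreq (omseq t) n x = (cnt t n x : ℝ) / n := by
      rw [relFreq, PiLp.toLp_apply, cnt_eq_card]
    have hcs : cesaro t n x = S t n x / n := by
      simp only [cesaro, PiLp.smul_apply, smul_eq_mul]
      rw [sum_apply_E, div_eq_inv_mul, S]
    rw [hrf, hcs, div_sub_div_same, abs_div, Nat.abs_cast]
    rcases Nat.eq_zero_or_pos n with hn | hn
    · subst hn; simp
    · apply div_le_div_of_nonneg_right ?_ (Nat.cast_nonneg n)
      rw [abs_le]
      exact ⟨by linarith [cnt_ge t ht n x], by linarith [cnt_le t ht n x]⟩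
  have hC : ∀ n : ℕ, dist (relFreq (omseq t) n) (cesaro t n) ≤ Real.sqrt k * k / n := by
    intro n
    rw [EuclideanSpace.dist_eq]
    have h2 : ∑ x : Ω, dist (relFreq (omseq t) n x) (cesaro t n x) ^ 2 ≤ k * (k / n) ^ 2 := by
      calc ∑ x : Ω, dist (relFreq (omseq t) n x) (cesaro t n x) ^ 2
          ≤ ∑ _x : Ω, (k / n) ^ 2 := by
            apply Finset.sum_le_sum
            intro x _
            rw [Real.dist_eq]
            exact pow_le_pow_left₀ (abs_nonneg _) (hbound n x) 2
        _ = k * (k / n) ^ 2 := by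
            rw [Finset.sum_const, Finset.card_univ, nsmul_eq_mul, hk]
    calc Real.sqrt (∑ x : Ω, dist (relFreq (omseq t) n x) (cesaro t n x) ^ 2)
        ≤ Real.sqrt (k * (k / n) ^ 2) := Real.sqrt_le_sqrt h2
      _ = Real.sqrt k * (k / n) := by
          rw [Real.sqrt_mul (by linarith) ((k / n) ^ 2), Real.sqrt_sq (by positivity)]
      _ = Real.sqrt k * k / n := by ring
  exact squeeze_zero (fun n => dist_nonneg) hC
    (tendsto_const_div_atTop_nhds_zero_nat (Real.sqrt k * k))


section EFin
variable {Ω : Type*} [Fintype Ω]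

theorem dist_le_of_coord {a b : EuclideanSpace ℝ Ω} {c : ℝ} (hc : 0 ≤ c)
    (h : ∀ x, |a x - b x| ≤ c) : dist a b ≤ Real.sqrt (Fintype.card Ω) * c := by
  set k := (Fintype.card Ω : ℝ) with hk
  rw [EuclideanSpace.dist_eq]
  have h2 : ∑ x : Ω, dist (a x) (b x) ^ 2 ≤ k * c ^ 2 := by
    calc ∑ x : Ω, dist (a x) (b x) ^ 2 ≤ ∑ _x : Ω, c ^ 2 := by
          apply Finset.sum_le_sum
          intro x _
          rw [Real.dist_eq]
          exact pow_le_pow_left₀ (abs_nonneg _) (h x) 2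
      _ = k * c ^ 2 := by rw [Finset.sum_const, Finset.card_univ, nsmul_eq_mul, hk]
  calc Real.sqrt (∑ x : Ω, dist (a x) (b x) ^ 2) ≤ Real.sqrt (k * c ^ 2) :=
        Real.sqrt_le_sqrt h2
    _ = Real.sqrt k * c := by
        rw [Real.sqrt_mul (Nat.cast_nonneg _) (c ^ 2), Real.sqrt_sq hc]

theorem norm_le_one_of_probVec {p : EuclideanSpace ℝ Ω} (hp : p ∈ probVec Ω) : ‖p‖ ≤ 1 := by
  rw [EuclideanSpace.norm_eq]
  have h1 : ∑ x : Ω, ‖p x‖ ^ 2 ≤ 1 := by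
    calc ∑ x : Ω, ‖p x‖ ^ 2 = ∑ x : Ω, p x ^ 2 := by
          apply Finset.sum_congr rfl
          intro x _
          rw [Real.norm_eq_abs, sq_abs]
      _ ≤ (∑ x : Ω, p x) ^ 2 := Finset.sum_sq_le_sq_sum_of_nonneg fun x _ => hp.1 x
      _ = 1 := by rw [hp.2]; norm_num
  calc Real.sqrt (∑ x : Ω, ‖p x‖ ^ 2) ≤ Real.sqrt 1 := Real.sqrt_le_sqrt h1
    _ = 1 := Real.sqrt_one

theorem isCompact_probVec : IsCompact (probVec Ω) := by
  have hclosed : IsClosed (probVec Ω) := by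
    have h1 : IsClosed {p : EuclideanSpace ℝ Ω | ∀ x, 0 ≤ p x} := by
      have : {p : EuclideanSpace ℝ Ω | ∀ x, 0 ≤ p x} =
          ⋂ x, {p : EuclideanSpace ℝ Ω | 0 ≤ p x} := by
        ext p; simp
      rw [this]
      exact isClosed_iInter fun x =>
        isClosed_le continuous_const ((PiLp.continuous_apply 2 _ x : Continuous fun p : EuclideanSpace ℝ Ω => p x))
    have h2 : IsClosed {p : EuclideanSpace ℝ Ω | ∑ x, p x = 1} :=
      isClosed_eq (continuous_finset_sum _ fun x _ => (PiLp.continuous_apply 2 _ x : Continuous fun p : EuclideanSpace ℝ Ω => p x))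
        continuous_const
    exact h1.inter h2
  have hsub : probVec Ω ⊆ Metric.closedBall 0 1 := by
    intro p hp
    rw [Metric.mem_closedBall, dist_zero_right]
    exact norm_le_one_of_probVec hp
  exact (isCompact_closedBall 0 1).of_isClosed_subset hclosed hsub

end EFin

section EDec
variable {Ω : Type*} [Fintype Ω] [DecidableEq Ω]

theorem sum_card_filter (ω : ℕ → Ω) (n : ℕ) :
    ∑ x : Ω, ((Finset.range n).filter fun i => ω i = x).card = n := by
  have h := Finset.card_eq_sum_card_fiberwise (s := Finset.range n)
    (t := (Finset.univ : Finset Ω)) (f := ω) (fun i _ => Finset.mem_univ (ω i))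
  rw [Finset.card_range] at h
  exact h.symm

theorem relFreq_mem (ω : ℕ → Ω) {n : ℕ} (hn : 1 ≤ n) : relFreq ω n ∈ probVec Ω := by
  constructor
  · intro x
    apply div_nonneg (Nat.cast_nonneg _) (Nat.cast_nonneg _)
  · have hn' : (n : ℝ) ≠ 0 := by positivity
    rw [show (∑ x, relFreq ω n x) = (∑ x : Ω,
        (((Finset.range n).filter fun i => ω i = x).card : ℝ)) / n by
      rw [Finset.sum_div]; rfl]
    rw [← Nat.cast_sum, sum_card_filter ω n, div_self hn']

theorem card_filter_succ (ω : ℕ → Ω) (n : ℕ) (x : Ω) :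
    ((Finset.range (n+1)).filter fun i => ω i = x).card =
      ((Finset.range n).filter fun i => ω i = x).card + if ω n = x then 1 else 0 := by
  rw [Finset.range_add_one, Finset.filter_insert]
  by_cases h : ω n = x
  · rw [if_pos h, if_pos h, Finset.card_insert_of_notMem (by simp)]
  · rw [if_neg h, if_neg h, add_zero]

theorem relFreq_step (ω : ℕ → Ω) {n : ℕ} (hn : 1 ≤ n) (x : Ω) :
    |relFreq ω (n+1) x - relFreq ω n x| ≤ 1 / (n + 1) := by
  set c := (((Finset.range n).filter fun i => ω i = x).card : ℝ) with hc
  have hc0 : 0 ≤ c := Nat.cast_nonneg _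
  have hcn : c ≤ n := by
    have h := Finset.card_filter_le (Finset.range n) (fun i => ω i = x)
    rw [Finset.card_range] at h
    rw [hc]
    exact_mod_cast h
  have hN : (0:ℝ) < n := by exact_mod_cast hn
  have hrel : relFreq ω n x = c / n := rfl
  by_cases h : ω n = x
  · have he : relFreq ω (n+1) x = (c + 1) / ((n:ℝ)+1) := by
      rw [relFreq, PiLp.toLp_apply, card_filter_succ, if_pos h, hc]
      push_cast
      ring_nf
    rw [he, hrel, div_sub_div _ _ (by positivity) (by positivity)]
    have heq : (c+1)*(n:ℝ) - ((n:ℝ)+1)*c = (n:ℝ) - c := by ring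
    rw [heq, abs_div, abs_of_nonneg (by linarith), abs_of_pos (by positivity)]
    rw [div_le_div_iff₀ (by positivity) (by positivity)]
    nlinarith
  · have he : relFreq ω (n+1) x = c / ((n:ℝ)+1) := by
      rw [relFreq, PiLp.toLp_apply, card_filter_succ, if_neg h, hc]
      push_cast
      ring_nf
    rw [he, hrel, div_sub_div _ _ (by positivity) (by positivity)]
    have heq : c*(n:ℝ) - ((n:ℝ)+1)*c = -c := by ring
    rw [heq, abs_div, abs_neg, abs_of_nonneg hc0, abs_of_pos (by positivity)]
    rw [div_le_div_iff₀ (by positivity) (by positivity)]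
    nlinarith

theorem relFreq_step_tendsto (ω : ℕ → Ω) :
    Tendsto (fun n => dist (relFreq ω (n+1)) (relFreq ω n)) atTop (𝓝 0) := by
  set k := Real.sqrt (Fintype.card Ω) with hk
  apply squeeze_zero' (g := fun n : ℕ => k * (1 / ((n:ℝ)+1)))
    (Eventually.of_forall fun n => dist_nonneg)
  · filter_upwards [eventually_ge_atTop 1] with n hn
    exact dist_le_of_coord (by positivity) (relFreq_step ω hn)
  · have h1 : Tendsto (fun n : ℕ => k / ((n:ℝ)+1)) atTop (𝓝 0) := by
      have h2 := (tendsto_const_div_atTop_nhds_zero_nat k).comp (tendsto_add_atTop_nat 1)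
      have h3 : ((fun n : ℕ => k / (n:ℝ)) ∘ fun a => a + 1) = fun n : ℕ => k / ((n:ℝ)+1) := by
        funext n
        simp [Function.comp]
      rwa [h3] at h2
    simpa [div_eq_mul_inv, mul_one_div] using h1

end EDec


variable {α : Type*}

def flat (l : ℕ → List α) (m : ℕ) : List α := (List.range m).flatMap l

def sig (l : ℕ → List α) (m : ℕ) : ℕ := (flat l m).length

theorem flat_succ (l : ℕ → List α) (m : ℕ) : flat l (m+1) = flat l m ++ l m := by
  rw [flat, List.range_succ, List.flatMap_append]
  simp [flat]

theorem sig_succ (l : ℕ → List α) (m : ℕ) : sig l (m+1) = sig l m + (l m).length := by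
  rw [sig, flat_succ, List.length_append]; rfl

theorem sig_zero (l : ℕ → List α) : sig l 0 = 0 := rfl

theorem le_sig (l : ℕ → List α) (hne : ∀ k, l k ≠ []) (m : ℕ) : m ≤ sig l m := by
  induction m with
  | zero => simp [sig_zero]
  | succ m ih =>
    rw [sig_succ]
    have := List.length_pos_iff.mpr (hne m)
    omega

theorem sig_mono (l : ℕ → List α) {a b : ℕ} (h : a ≤ b) : sig l a ≤ sig l b := by
  induction h with
  | refl => exact le_refl _
  | step h ih => rw [sig_succ]; omega

theorem flat_prefix (l : ℕ → List α) {a b : ℕ} (h : a ≤ b) : flat l a <+: flat l b := by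
  induction h with
  | refl => exact List.prefix_refl _
  | step h ih =>
    rw [flat_succ]
    exact ih.trans (List.prefix_append _ _)

def yseq (l : ℕ → List α) (d : α) (n : ℕ) : α := (flat l (n+1)).getD n d

theorem getD_flat_eq (l : ℕ → List α) (d : α) {a b n : ℕ} (h : n < sig l a) (hab : a ≤ b) :
    (flat l b).getD n d = (flat l a).getD n d := by
  have hpre := flat_prefix l hab
  have hb : n < (flat l b).length := lt_of_lt_of_le h hpre.length_le
  rw [List.getD_eq_getElem _ _ hb, List.getD_eq_getElem _ _ h]
  exact (hpre.getElem h).symm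

theorem yseq_eq (l : ℕ → List α) (hne : ∀ k, l k ≠ []) (d : α) {m n : ℕ} (h : n < sig l m) :
    yseq l d n = (flat l m).getD n d := by
  rcases le_total m (n+1) with h2 | h2
  · exact (getD_flat_eq l d h h2).symm ▸ rfl
  · have hn : n < sig l (n+1) := lt_of_lt_of_le (Nat.lt_succ_self n) (le_sig l hne (n+1))
    rw [yseq]
    exact (getD_flat_eq l d hn h2).symm

theorem yseq_block (l : ℕ → List α) (hne : ∀ k, l k ≠ []) (d : α) {k i : ℕ}
    (hi : i < (l k).length) :
    yseq l d (sig l k + i) = (l k).getD i d := by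
  have h1 : sig l k + i < sig l (k+1) := by rw [sig_succ]; omega
  rw [yseq_eq l hne d h1, flat_succ]
  have h2 : sig l k + i < (flat l k ++ l k).length := by
    rw [List.length_append]; change sig l k + i < sig l k + _; omega
  rw [List.getD_eq_getElem _ _ h2, List.getD_eq_getElem _ _ hi]
  rw [List.getElem_append_right (by change sig l k ≤ _; omega)]
  congr 1
  change sig l k + i - sig l k = i
  omega

theorem decomp (l : ℕ → List α) {m n : ℕ} (h : n < sig l m) :
    ∃ k, k < m ∧ ∃ i, i < (l k).length ∧ n = sig l k + i := by
  induction m with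
  | zero => simp [sig_zero] at h
  | succ m ih =>
    rcases Nat.lt_or_ge n (sig l m) with h2 | h2
    · obtain ⟨k, hk, i, hi, he⟩ := ih h2
      exact ⟨k, by omega, i, hi, he⟩
    · refine ⟨m, by omega, n - sig l m, ?_, by omega⟩
      rw [sig_succ] at h
      omega

theorem chain_mem_set {X : Type*} {N : Set X} {r : X → X → Prop} (hr : ∀ a b, r a b → b ∈ N) :
    ∀ {a : X} {c : List X}, List.Chain r a c → ∀ x ∈ c, x ∈ N := by
  intro a c h
  induction c generalizing a with
  | nil => intro x hx; simp at hx
  | cons b c ih =>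
    intro x hx
    have h' : List.IsChain r (a :: b :: c) := h
    rw [List.isChain_cons_cons] at h'
    rcases List.mem_cons.mp hx with rfl | hx2
    · exact hr _ _ h'.1
    · exact ih h'.2 x hx2

/-- Main construction: a slowly-varying sequence inside `N` clustering at every point of `N`. -/
theorem exists_slow_dense {X : Type*} [MetricSpace X] [SecondCountableTopology X] {N : Set X}
    (hconn : IsPreconnected N) (hne : N.Nonempty) :
    ∃ y : ℕ → X, (∀ j, y j ∈ N) ∧ Tendsto (fun j => dist (y (j+1)) (y j)) atTop (𝓝 0) ∧
      ∀ p ∈ N, MapClusterPt p atTop y := by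
  have : Nonempty ↥N := hne.to_subtype
  obtain ⟨u, hu⟩ := TopologicalSpace.exists_dense_seq ↥N
  set q : ℕ → X := fun j => (u (Nat.unpair j).1 : X) with hq
  have hqN : ∀ j, q j ∈ N := fun j => (u (Nat.unpair j).1).2
  have hch : ∀ j : ℕ, ∃ c : List X,
      List.Chain (fun a b => b ∈ N ∧ dist a b < 1/((j:ℝ)+1)) (q j) c ∧
      (q j :: c).getLast (List.cons_ne_nil _ _) = q (j+1) := by
    intro j
    exact List.exists_isChain_cons_of_relationReflTransGen
      (chain_of_preconnected hconn (hqN j) (hqN (j+1)) (by positivity))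
  choose c hc1 hc2 using hch
  set l : ℕ → List X := fun j => q j :: c j with hl
  have hlne : ∀ k, l k ≠ [] := fun k => List.cons_ne_nil _ _
  have hmemN : ∀ k, ∀ x ∈ l k, x ∈ N := by
    intro k x hx
    rcases List.mem_cons.mp hx with rfl | hx2
    · exact hqN k
    · exact chain_mem_set (fun a b h => h.1) (hc1 k) x hx2
  have hchain' : ∀ k : ℕ, List.Chain' (fun a b => b ∈ N ∧ dist a b < 1/((k:ℝ)+1)) (l k) :=
    fun k => hc1 k
  set y : ℕ → X := yseq l (q 0) with hy
  have hyN : ∀ n, y n ∈ N := by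
    intro n
    have hn : n < sig l (n+1) := lt_of_lt_of_le (Nat.lt_succ_self n) (le_sig l hlne (n+1))
    obtain ⟨k, hk, i, hi, he⟩ := decomp l hn
    rw [hy, he, yseq_block l hlne _ hi, List.getD_eq_getElem _ _ hi]
    exact hmemN k _ (List.getElem_mem hi)
  have hstep : ∀ J n : ℕ, sig l J ≤ n → dist (y n) (y (n+1)) ≤ 1/((J:ℝ)+1) := by
    intro J n hJn
    have hn : n < sig l (n+1) := lt_of_lt_of_le (Nat.lt_succ_self n) (le_sig l hlne (n+1))
    obtain ⟨k, hk, i, hi, he⟩ := decomp l hn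
    subst he
    have hkJ : J ≤ k := by
      by_contra h
      push_neg at h
      have h1 : sig l (k+1) ≤ sig l J := sig_mono l (by omega)
      have h2 : sig l (k+1) = sig l k + (l k).length := sig_succ l k
      omega
    have hbnd : 1/((k:ℝ)+1) ≤ 1/((J:ℝ)+1) := by
      apply one_div_le_one_div_of_le (by positivity)
      have : (J:ℝ) ≤ (k:ℝ) := by exact_mod_cast hkJ
      linarith
    have e1 : y (sig l k + i) = (l k).getD i (q 0) := yseq_block l hlne _ hi
    rcases Nat.lt_or_ge (i+1) (l k).length with h2 | h2
    · have e2 : y (sig l k + i + 1) = (l k).getD (i+1) (q 0) := by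
        rw [show sig l k + i + 1 = sig l k + (i+1) by omega]
        exact yseq_block l hlne _ h2
      rw [e1, e2, List.getD_eq_getElem _ _ hi, List.getD_eq_getElem _ _ h2]
      have hcons := (List.isChain_iff_getElem.mp (hchain' k)) i (by omega)
      exact le_trans (le_of_lt hcons.2) hbnd
    · have hieq : i + 1 = (l k).length := by omega
      have e2 : y (sig l k + i + 1) = q (k+1) := by
        have h3 : sig l k + i + 1 = sig l (k+1) + 0 := by rw [sig_succ]; omega
        have h0' : (0:ℕ) < (l (k+1)).length := List.length_pos_iff.mpr (hlne (k+1))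
        have h6 := yseq_block l hlne (q 0) h0'
        calc y (sig l k + i + 1) = yseq l (q 0) (sig l (k+1) + 0) := by rw [h3]
          _ = (l (k+1)).getD 0 (q 0) := h6
          _ = q (k+1) := rfl
      have e3 : (l k).getD i (q 0) = q (k+1) := by
        rw [List.getD_eq_getElem _ _ hi]
        have h4 := List.getLast_eq_getElem (hlne k)
        have h5 : (l k).getLast (hlne k) = q (k+1) := hc2 k
        rw [h4] at h5
        have hii : i = (l k).length - 1 := by omega
        subst hii
        exact h5
      rw [e1, e2, e3, dist_self]
      positivity
  have htend : Tendsto (fun j => dist (y (j+1)) (y j)) atTop (𝓝 0) := by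
    rw [Metric.tendsto_atTop]
    intro ε hε
    obtain ⟨J, hJ⟩ := exists_nat_one_div_lt hε
    refine ⟨sig l J, fun n hn => ?_⟩
    rw [Real.dist_eq, sub_zero, abs_of_nonneg dist_nonneg, dist_comm]
    exact lt_of_le_of_lt (hstep J n hn) hJ
  have hclu : ∀ p ∈ N, MapClusterPt p atTop y := by
    intro p hp
    rw [mapClusterPt_iff_dist]
    intro ε hε
    rw [frequently_atTop]
    intro M
    obtain ⟨i, hi⟩ := hu.exists_dist_lt ⟨p, hp⟩ hε
    refine ⟨sig l (Nat.pair i M), ?_, ?_⟩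
    · calc M ≤ Nat.pair i M := Nat.right_le_pair i M
        _ ≤ sig l (Nat.pair i M) := le_sig l hlne _
    · have h0 : (0:ℕ) < (l (Nat.pair i M)).length := List.length_pos_iff.mpr (hlne _)
      have e := yseq_block l hlne (q 0) h0
      rw [Nat.add_zero] at e
      have e2 : y (sig l (Nat.pair i M)) = q (Nat.pair i M) := e
      rw [e2, hq]
      simp only [Nat.unpair_pair]
      have hdist : dist p (u i : X) < ε := by
        have h7 := hi
        rw [Subtype.dist_eq] at h7
        exact h7
      rw [dist_comm] at hdist
      exact hdist
  exact ⟨y, hyN, htend, hclu⟩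


/-- Block lengths. -/
def blk : ℕ → ℕ
  | 0 => 1
  | j + 1 => 2 * (j + 2) * blk j

theorem blk_pos (j : ℕ) : 0 < blk j := by
  induction j with
  | zero => simp [blk]
  | succ j ih => simp only [blk]; positivity

theorem blk_gt (j : ℕ) : j < blk j := by
  induction j with
  | zero => simp [blk]
  | succ j ih =>
    have := blk_pos j
    simp only [blk]
    nlinarith

theorem blk_mono {a b : ℕ} (h : a ≤ b) : blk a ≤ blk b := by
  induction h with
  | refl => exact le_refl _
  | @step m h ih =>
    have hp := blk_pos m
    simp only [blk]
    nlinarith [ih]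

/-- Index of the block containing `n`. -/
def bidx (n : ℕ) : ℕ := Nat.findGreatest (fun j => blk j ≤ n) n

theorem le_bidx {j n : ℕ} (h : blk j ≤ n) : j ≤ bidx n :=
  Nat.le_findGreatest (le_trans (le_of_lt (blk_gt j)) h) h

theorem bidx_gt (n : ℕ) : n < blk (bidx n + 1) := by
  by_contra h
  push_neg at h
  have h1 : bidx n + 1 ≤ bidx n := le_bidx h
  omega

theorem bidx_eq {j n : ℕ} (h1 : blk j ≤ n) (h2 : n < blk (j+1)) : bidx n = j := by
  have ha : j ≤ bidx n := le_bidx h1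
  have hb : blk (bidx n) ≤ n :=
    Nat.findGreatest_spec (P := fun j => blk j ≤ n) (m := j) (le_trans (le_of_lt (blk_gt j)) h1) h1
  by_contra hne
  have : j + 1 ≤ bidx n := by omega
  have := blk_mono this
  omega

section Main

variable {Ω : Type*} [Fintype Ω]

theorem cesaro_sub (t : ℕ → EuclideanSpace ℝ Ω) (v : EuclideanSpace ℝ Ω) {n : ℕ} (hn : 1 ≤ n) :
    cesaro t n - v = (n:ℝ)⁻¹ • ∑ i ∈ Finset.range n, (t i - v) := by
  have hn' : (n:ℝ) ≠ 0 := by positivity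
  rw [Finset.sum_sub_distrib, cesaro, smul_sub, Finset.sum_const, Finset.card_range]
  congr 1
  rw [← Nat.cast_smul_eq_nsmul ℝ, smul_smul, inv_mul_cancel₀ hn', one_smul]

/-- Representation of the Cesàro average within a block. -/
theorem cesaro_rep (y : ℕ → EuclideanSpace ℝ Ω) {j n : ℕ} (h1 : blk j ≤ n) (h2 : n ≤ blk (j+1)) :
    cesaro (fun i => y (bidx i)) n - y j
      = (n:ℝ)⁻¹ • ∑ i ∈ Finset.range (blk j), (y (bidx i) - y j) := by
  have hn : 1 ≤ n := le_trans (blk_pos j) h1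
  rw [cesaro_sub _ _ hn]
  congr 1
  apply (Finset.sum_subset ?_ ?_).symm
  · intro i hi
    rw [Finset.mem_range] at hi ⊢
    omega
  · intro i hi hni
    rw [Finset.mem_range] at hi
    rw [Finset.mem_range, not_lt] at hni
    have : bidx i = j := bidx_eq hni (lt_of_lt_of_le hi h2)
    rw [this, sub_self]

theorem norm_blocksum_le (y : ℕ → EuclideanSpace ℝ Ω) (hy : ∀ j, y j ∈ probVec Ω) (j : ℕ) :
    ‖∑ i ∈ Finset.range (blk j), (y (bidx i) - y j)‖ ≤ 2 * blk j := by
  calc ‖∑ i ∈ Finset.range (blk j), (y (bidx i) - y j)‖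
      ≤ ∑ i ∈ Finset.range (blk j), ‖y (bidx i) - y j‖ := norm_sum_le _ _
    _ ≤ ∑ _i ∈ Finset.range (blk j), (2:ℝ) := by
        apply Finset.sum_le_sum
        intro i _
        calc ‖y (bidx i) - y j‖ ≤ ‖y (bidx i)‖ + ‖y j‖ := norm_sub_le _ _
          _ ≤ 1 + 1 := add_le_add (norm_le_one_of_probVec (hy _)) (norm_le_one_of_probVec (hy _))
          _ = 2 := by norm_num
    _ = 2 * blk j := by rw [Finset.sum_const, Finset.card_range, nsmul_eq_mul]; ring

theorem cesaro_end (y : ℕ → EuclideanSpace ℝ Ω) (hy : ∀ j, y j ∈ probVec Ω) (j : ℕ) :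
    ‖cesaro (fun i => y (bidx i)) (blk (j+1)) - y j‖ ≤ 1/((j:ℝ)+2) := by
  rw [cesaro_rep y (le_of_lt (blk_mono (le_refl j) |>.trans_lt ?hlt)) (le_refl _), norm_smul]
  case hlt => simp only [blk]; have := blk_pos j; nlinarith
  have hb := blk_pos j
  have hbj1 : (0:ℝ) < blk (j+1) := by exact_mod_cast blk_pos (j+1)
  calc ‖((blk (j+1) : ℝ))⁻¹‖ * ‖∑ i ∈ Finset.range (blk j), (y (bidx i) - y j)‖
      ≤ ((blk (j+1) : ℝ))⁻¹ * (2 * blk j) := by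
        rw [norm_inv, Real.norm_natCast]
        apply mul_le_mul_of_nonneg_left (norm_blocksum_le y hy j) (by positivity)
    _ = 1/((j:ℝ)+2) := by
        have he : (blk (j+1) : ℝ) = 2 * ((j:ℝ)+2) * blk j := by
          simp only [blk]
          push_cast
          ring
        rw [he]
        field_simp
  
theorem cesaro_in (y : ℕ → EuclideanSpace ℝ Ω) {j n : ℕ} (h1 : blk j ≤ n) (h2 : n ≤ blk (j+1)) :
    ‖cesaro (fun i => y (bidx i)) n - y j‖
      ≤ ‖cesaro (fun i => y (bidx i)) (blk j) - y j‖ := by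
  have h3 : blk j ≤ blk (j+1) := blk_mono (by omega)
  rw [cesaro_rep y h1 h2, cesaro_rep y (le_refl _) h3, norm_smul, norm_smul]
  apply mul_le_mul_of_nonneg_right ?_ (norm_nonneg _)
  rw [norm_inv, norm_inv, Real.norm_natCast, Real.norm_natCast]
  have hb : (0:ℝ) < blk j := by exact_mod_cast blk_pos j
  have hn : (blk j : ℝ) ≤ n := by exact_mod_cast h1
  apply inv_anti₀ hb hn

theorem clusterPts_cesaro_eq {N : Set (EuclideanSpace ℝ Ω)}
    (hNsub : N ⊆ probVec Ω) (hNclosed : IsClosed N) (hNne : N.Nonempty)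
    (y : ℕ → EuclideanSpace ℝ Ω) (hyN : ∀ j, y j ∈ N)
    (hstep : Tendsto (fun j => dist (y (j+1)) (y j)) atTop (𝓝 0))
    (hclu : ∀ p ∈ N, MapClusterPt p atTop y) :
    {c | MapClusterPt c atTop (cesaro fun i => y (bidx i))} = N := by
  set cs := cesaro fun i => y (bidx i) with hcs
  have hyΔ : ∀ j, y j ∈ probVec Ω := fun j => hNsub (hyN j)
  have hinf : Tendsto (fun n => infDist (cs n) N) atTop (𝓝 0) := by
    rw [Metric.tendsto_atTop]
    intro ε hε
    obtain ⟨J₀, hJ₀⟩ := exists_nat_one_div_lt (show (0:ℝ) < ε/2 by linarith)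
    obtain ⟨J₁, hJ₁⟩ := Metric.tendsto_atTop.mp hstep (ε/2) (by linarith)
    refine ⟨blk (max J₀ J₁ + 1), fun n hn => ?_⟩
    set J := max J₀ J₁ with hJ
    set j' := bidx n with hj'
    have hjJ : J + 1 ≤ j' := le_bidx hn
    have hab : blk j' ≤ n := Nat.findGreatest_spec (P := fun j => blk j ≤ n) (m := J+1)
        (le_trans (le_of_lt (blk_gt _)) hn) hn
    have hup : n ≤ blk (j'+1) := le_of_lt (bidx_gt n)
    set jj := j' - 1 with hjj
    have hj1 : j' = jj + 1 := by omega
    have e1 : ‖cs n - y j'‖ ≤ ‖cs (blk j') - y j'‖ := cesaro_in y hab hup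
    have e2 : ‖cs (blk j') - y jj‖ ≤ 1/((jj:ℝ)+2) := by
      have h := cesaro_end y hyΔ jj
      rwa [← hj1] at h
    have e3 : dist (cs (blk j')) (y j') ≤ dist (cs (blk j')) (y jj) + dist (y jj) (y j') :=
      dist_triangle _ _ _
    have e4 : dist (y jj) (y j') < ε/2 := by
      have h := hJ₁ jj (by omega)
      rw [Real.dist_eq, sub_zero, abs_of_nonneg dist_nonneg] at h
      rw [hj1, dist_comm]
      exact h
    have e5 : 1/((jj:ℝ)+2) < ε/2 := by
      have hjJ0 : (J₀:ℝ) ≤ (jj:ℝ) := by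
        have : J₀ ≤ jj := by omega
        exact_mod_cast this
      calc 1/((jj:ℝ)+2) ≤ 1/((J₀:ℝ)+1) := by
            apply one_div_le_one_div_of_le (by positivity)
            linarith
        _ < ε/2 := hJ₀
    have e6 : infDist (cs n) N ≤ dist (cs n) (y j') := infDist_le_dist_of_mem (hyN j')
    rw [Real.dist_eq, sub_zero, abs_of_nonneg infDist_nonneg]
    rw [dist_eq_norm] at e6
    rw [dist_eq_norm, dist_eq_norm] at e3
    linarith
  apply Set.eq_of_subset_of_subset
  · intro p hp
    have h0 : infDist p N = 0 := by
      by_contra h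
      have hpos : 0 < infDist p N := lt_of_le_of_ne infDist_nonneg (Ne.symm h)
      set ε := infDist p N / 3 with hε
      have hfreq := (mapClusterPt_iff_dist.mp hp) ε (by positivity)
      have hev : ∀ᶠ n in atTop, infDist (cs n) N < ε :=
        hinf.eventually (gt_mem_nhds (by positivity))
      obtain ⟨n, hn1, hn2⟩ := (hfreq.and_eventually hev).exists
      have := infDist_le_infDist_add_dist (x := p) (y := cs n) (s := N)
      rw [dist_comm] at hn1
      linarith
    exact (hNclosed.mem_iff_infDist_zero hNne).mpr h0
  · intro p hp
    rw [Set.mem_setOf_eq, mapClusterPt_iff_dist]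
    intro ε hε
    rw [frequently_atTop]
    intro M
    obtain ⟨J₀, hJ₀⟩ := exists_nat_one_div_lt (show (0:ℝ) < ε/2 by linarith)
    obtain ⟨j, hj1, hj2⟩ := frequently_atTop.mp
      ((mapClusterPt_iff_dist.mp (hclu p hp)) (ε/2) (by linarith)) (max M J₀)
    refine ⟨blk (j+1), ?_, ?_⟩
    · calc M ≤ j := le_trans (le_max_left _ _) hj1
        _ ≤ blk (j+1) := by have := blk_gt (j+1); omega
    · have e1 : ‖cs (blk (j+1)) - y j‖ ≤ 1/((j:ℝ)+2) := cesaro_end y hyΔ j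
      have e2 : 1/((j:ℝ)+2) ≤ 1/((J₀:ℝ)+1) := by
        apply one_div_le_one_div_of_le (by positivity)
        have : (J₀:ℝ) ≤ (j:ℝ) := by exact_mod_cast le_trans (le_max_right M J₀) hj1
        linarith
      calc dist (cs (blk (j+1))) p ≤ dist (cs (blk (j+1))) (y j) + dist (y j) p :=
            dist_triangle _ _ _
        _ < 1/((J₀:ℝ)+1) + ε/2 := by
            rw [dist_eq_norm]
            exact add_lt_add_of_le_of_lt (le_trans e1 e2) hj2
        _ < ε := by linarith

end Main


end Stmt6Aux
end Stmt6AuxAll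

/-- A set `N ⊆ Δ^k` arises as the set of cluster points of the relative
frequencies of some data sequence if and only if `N` is a nonempty closed connected subset
of the simplex. -/
theorem stmt6 {Ω : Type*} [Fintype Ω] [DecidableEq Ω] (hcard : 1 < Fintype.card Ω)
    (N : Set (EuclideanSpace ℝ Ω)) :
    (∃ ω : ℕ → Ω, clusterPts (relFreq ω) = N) ↔
      (N.Nonempty ∧ IsClosed N ∧ IsConnected N ∧ N ⊆ probVec Ω) := by
  have hNe : Nonempty Ω := Fintype.card_pos_iff.mp (by omega)
  constructor
  · rintro ⟨ω, rfl⟩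
    have hmem : ∀ n, 1 ≤ n → relFreq ω n ∈ probVec Ω := fun n hn => Stmt6Aux.relFreq_mem ω hn
    have hconn := Stmt6Aux.forward_lemma Stmt6Aux.isCompact_probVec hmem
      (Stmt6Aux.relFreq_step_tendsto ω)
    exact ⟨hconn.nonempty, Stmt6Aux.isClosed_clusterPts _, hconn,
      Stmt6Aux.clusterPts_subset Stmt6Aux.isCompact_probVec.isClosed hmem⟩
  · rintro ⟨hne, hclosed, hconn, hsub⟩
    obtain ⟨y, hyN, hstep, hclu⟩ := Stmt6Aux.exists_slow_dense hconn.isPreconnected hne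
    set t : ℕ → EuclideanSpace ℝ Ω := fun i => y (Stmt6Aux.bidx i) with ht
    have htΔ : ∀ i, t i ∈ probVec Ω := fun i => hsub (hyN _)
    refine ⟨Stmt6Aux.omseq t, ?_⟩
    have h1 : clusterPts (relFreq (Stmt6Aux.omseq t)) = clusterPts (cesaro t) :=
      Stmt6Aux.clusterPts_congr (Stmt6Aux.dist_relFreq_cesaro t htΔ)
    rw [h1]
    exact Stmt6Aux.clusterPts_cesaro_eq hsub hclosed hne y hyN hstep hclu
end

section
/- Let Ω be a finite set with k := |Ω| > 1, let m = (m_1, m_2, …) be a sequence of probability measures on Ω, and suppose m ∈ Δ^k is a cluster point of the sequence (m_i) with respect to the Euclidean metric. Then there exists a selection rule S : ℕ → {0,1} selecting infinitely many indices such that IT(m)({ω ∈ Ω^ℕ : CP(n ↦ r_n(ω_S)) = {m}}) = 1, where ω_S is the subsequence of ω at the indices selected by S. -/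
open MeasureTheory Filter Topology
open scoped ENNReal

section AuxLemmas

set_option linter.unnecessarySeqFocus false

lemma aux_sum_prod {Ω : Type*} [Fintype Ω] [DecidableEq Ω] (N : ℕ) (g : Fin N → Ω → ℝ) :
    ∑ x : Fin N → Ω, ∏ i, g i (x i) = ∏ i, ∑ a, g i a := by
  classical
  rw [Finset.prod_univ_sum (fun _ => (Finset.univ : Finset Ω)) g, Fintype.piFinset_univ]

lemma aux_nth (f : ℕ → ℕ) (hf : StrictMono f) :
    Nat.nth (fun i => i ∈ Set.range f) = f := by
  have hinf : (setOf fun i => i ∈ Set.range f).Infinite :=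
    Set.infinite_range_of_injective hf.injective
  have h1 : StrictMono (Nat.nth fun i => i ∈ Set.range f) := Nat.nth_strictMono hinf
  have h2 : Set.range (Nat.nth fun i => i ∈ Set.range f) = Set.range f :=
    Nat.range_nth_of_infinite hinf
  exact (StrictMono.range_inj h1 hf).mp h2

lemma aux_clusterPts {X : Type*} [TopologicalSpace X] [T2Space X] {a : ℕ → X} {p : X}
    (h : Tendsto a atTop (𝓝 p)) : clusterPts a = {p} := by
  ext c
  simp only [clusterPts, Set.mem_setOf_eq, Set.mem_singleton_iff]
  constructor
  · intro hc
    have h1 : ClusterPt c (𝓝 p) := ClusterPt.mono hc h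
    exact t2_iff_nhds.mp inferInstance h1
  · rintro rfl; exact h.mapClusterPt

lemma aux_tendsto_euclidean {Ω : Type*} [Fintype Ω] {a : ℕ → EuclideanSpace ℝ Ω}
    {p : EuclideanSpace ℝ Ω} (h : ∀ x, Tendsto (fun n => a n x) atTop (𝓝 (p x))) :
    Tendsto a atTop (𝓝 p) := by
  have h1 : Tendsto (fun n => (WithLp.equiv 2 (Ω → ℝ)) (a n)) atTop
      (𝓝 ((WithLp.equiv 2 (Ω → ℝ)) p)) := tendsto_pi_nhds.mpr h
  have h2 := ((PiLp.continuous_toLp 2 (fun _ : Ω => ℝ)).tendsto _).comp h1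
  exact h2

lemma aux_measure_event {Ω : Type*} [Fintype Ω] [DecidableEq Ω] [MeasurableSpace Ω]
    [MeasurableSingletonClass Ω]
    (m : ℕ → EuclideanSpace ℝ Ω) (hm : ∀ i, m i ∈ probVec Ω)
    {μ : Measure (ℕ → Ω)} (hμ : IsIT m μ) (N : ℕ) (E : Finset (Fin N → Ω)) :
    μ {ω : ℕ → Ω | (fun i : Fin N => ω (i : ℕ)) ∈ E} =
      ENNReal.ofReal (∑ x ∈ E, ∏ i : Fin N, m (i : ℕ) (x i)) := by
  classical
  have hset : {ω : ℕ → Ω | (fun i : Fin N => ω (i : ℕ)) ∈ E}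
      = ⋃ x ∈ E, {ω : ℕ → Ω | ∀ i : Fin N, ω (i : ℕ) = x i} := by
    ext ω
    simp only [Set.mem_setOf_eq, Set.mem_iUnion]
    constructor
    · intro h; exact ⟨_, h, fun i => rfl⟩
    · rintro ⟨x, hx, hωx⟩
      have hx2 : (fun i : Fin N => ω (i : ℕ)) = x := funext hωx
      rw [hx2]; exact hx
  rw [hset, measure_biUnion_finset ?hd ?hmeas]
  · rw [ENNReal.ofReal_sum_of_nonneg
      (fun x _ => Finset.prod_nonneg fun i _ => (hm _).1 (x i))]
    apply Finset.sum_congr rfl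
    intro x _
    rw [hμ N x, ENNReal.ofReal_prod_of_nonneg (fun i _ => (hm _).1 (x i))]
  case hd =>
    intro x hx y hy hxy
    rw [Function.onFun, Set.disjoint_left]
    intro ω hωx hωy
    exact hxy (funext fun i => (hωx i).symm.trans (hωy i))
  case hmeas =>
    intro x _
    have : {ω : ℕ → Ω | ∀ i : Fin N, ω (i : ℕ) = x i}
        = ⋂ i : Fin N, (fun ω : ℕ → Ω => ω (i : ℕ)) ⁻¹' {x i} := by
      ext ω; simp [Set.mem_iInter]
    rw [this]
    exact MeasurableSet.iInter fun i =>
      (measurable_pi_apply (i : ℕ)) (measurableSet_singleton (x i))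

lemma aux_cheb {Ω : Type*} [Fintype Ω] [DecidableEq Ω] {N n : ℕ}
    (w : Fin N → Ω → ℝ) (hw0 : ∀ i a, 0 ≤ w i a) (hw1 : ∀ i, ∑ a, w i a = 1)
    (e : Fin n → Fin N) (he : Function.Injective e) (x₀ : Ω) (c : ℝ) (hc : 0 < c) :
    ∑ x ∈ Finset.univ.filter (fun x : Fin N → Ω =>
        c ≤ |∑ j : Fin n, ((if x (e j) = x₀ then (1:ℝ) else 0) - w (e j) x₀)|),
      ∏ i, w i (x i) ≤ n / c ^ 2 := by
  classical
  set Y : Fin n → (Fin N → Ω) → ℝ :=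
    fun j x => (if x (e j) = x₀ then (1:ℝ) else 0) - w (e j) x₀ with hYdef
  have hq0 : ∀ j, 0 ≤ w (e j) x₀ := fun j => hw0 _ _
  have hq1 : ∀ j, w (e j) x₀ ≤ 1 := fun j => by
    rw [← hw1 (e j)]
    exact Finset.single_le_sum (fun a _ => hw0 _ a) (Finset.mem_univ x₀)
  -- factorized correlations
  have hC : ∀ j j' : Fin n,
      (∑ x : Fin N → Ω, (∏ i, w i (x i)) * (Y j x * Y j' x))
      = ∏ i : Fin N, ∑ a : Ω,
          (w i a * (if i = e j then ((if a = x₀ then (1:ℝ) else 0) - w (e j) x₀) else 1))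
            * (if i = e j' then ((if a = x₀ then (1:ℝ) else 0) - w (e j') x₀) else 1) := by
    intro j j'
    rw [← aux_sum_prod]
    apply Finset.sum_congr rfl
    intro x _
    rw [Finset.prod_mul_distrib, Finset.prod_mul_distrib]
    have h1 : ∏ i : Fin N, (if i = e j then ((if x i = x₀ then (1:ℝ) else 0) - w (e j) x₀) else 1)
        = Y j x := by
      rw [Fintype.prod_ite_eq' (e j)
        (fun i => (if x i = x₀ then (1:ℝ) else 0) - w (e j) x₀)]
    have h2 : ∏ i : Fin N, (if i = e j' then ((if x i = x₀ then (1:ℝ) else 0) - w (e j') x₀) else 1)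
        = Y j' x := by
      rw [Fintype.prod_ite_eq' (e j')
        (fun i => (if x i = x₀ then (1:ℝ) else 0) - w (e j') x₀)]
    rw [h1, h2, mul_assoc]
  have hCoff : ∀ j j' : Fin n, j ≠ j' →
      (∑ x : Fin N → Ω, (∏ i, w i (x i)) * (Y j x * Y j' x)) = 0 := by
    intro j j' hjj
    rw [hC j j']
    apply Finset.prod_eq_zero (Finset.mem_univ (e j))
    have hne : (e j = e j') = False := eq_false fun h => hjj (he h)
    simp only [eq_self_iff_true, if_true, hne, if_false, mul_one]
    have : ∑ a : Ω, w (e j) a * ((if a = x₀ then (1:ℝ) else 0) - w (e j) x₀)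
        = (∑ a : Ω, (if a = x₀ then w (e j) a else 0)) - (∑ a : Ω, w (e j) a) * w (e j) x₀ := by
      rw [Finset.sum_mul, ← Finset.sum_sub_distrib]
      apply Finset.sum_congr rfl
      intro a _
      by_cases h : a = x₀ <;> simp [h] <;> ring
    rw [this, hw1 (e j), Finset.sum_ite_eq' Finset.univ x₀ (fun a => w (e j) a)]
    simp
  have hCdiag : ∀ j : Fin n,
      (∑ x : Fin N → Ω, (∏ i, w i (x i)) * (Y j x * Y j x)) ≤ 1 := by
    intro j
    rw [hC j j]
    rw [Finset.prod_eq_single (e j) ?h0 ?h1]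
    · simp only [eq_self_iff_true, if_true]
      have hb : ∀ a : Ω,
          (w (e j) a * ((if a = x₀ then (1:ℝ) else 0) - w (e j) x₀))
            * ((if a = x₀ then (1:ℝ) else 0) - w (e j) x₀) ≤ w (e j) a := by
        intro a
        have h1 := hq0 j; have h2 := hq1 j; have h3 := hw0 (e j) a
        by_cases h : a = x₀
        · simp only [h, eq_self_iff_true, if_true]
          nlinarith [mul_nonneg (mul_nonneg h1 h1) (by linarith : (0:ℝ) ≤ 2 - w (e j) x₀)]
        · simp only [if_neg h]
          nlinarith [mul_nonneg (mul_nonneg h3 (by linarith : (0:ℝ) ≤ 1 - w (e j) x₀))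
            (by linarith : (0:ℝ) ≤ 1 + w (e j) x₀)]
      calc ∑ a : Ω, (w (e j) a * ((if a = x₀ then (1:ℝ) else 0) - w (e j) x₀))
            * ((if a = x₀ then (1:ℝ) else 0) - w (e j) x₀)
          ≤ ∑ a : Ω, w (e j) a := Finset.sum_le_sum fun a _ => hb a
        _ = 1 := hw1 (e j)
    case h0 =>
      intro i _ hi
      have hne : (i = e j) = False := eq_false hi
      simp only [hne, if_false, mul_one, hw1 i]
    case h1 =>
      intro h; exact absurd (Finset.mem_univ (e j)) h
  -- second moment bound
  have key : (∑ x : Fin N → Ω, (∏ i, w i (x i)) * (∑ j, Y j x) ^ 2) ≤ (n : ℝ) := by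
    have hexp : ∀ x : Fin N → Ω, (∏ i, w i (x i)) * (∑ j, Y j x) ^ 2
        = ∑ j : Fin n, ∑ j' : Fin n, (∏ i, w i (x i)) * (Y j x * Y j' x) := by
      intro x
      rw [sq, Finset.sum_mul_sum, Finset.mul_sum]
      apply Finset.sum_congr rfl
      intro j _; rw [Finset.mul_sum]
    calc (∑ x : Fin N → Ω, (∏ i, w i (x i)) * (∑ j, Y j x) ^ 2)
        = ∑ j : Fin n, ∑ j' : Fin n, ∑ x : Fin N → Ω, (∏ i, w i (x i)) * (Y j x * Y j' x) := by
          simp_rw [hexp]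
          rw [Finset.sum_comm]
          apply Finset.sum_congr rfl
          intro j _
          rw [Finset.sum_comm]
      _ = ∑ j : Fin n, ∑ x : Fin N → Ω, (∏ i, w i (x i)) * (Y j x * Y j x) := by
          apply Finset.sum_congr rfl
          intro j _
          apply Finset.sum_eq_single j
          · intro j' _ hj'
            exact hCoff j j' (fun h => hj' h.symm)
          · intro h; exact absurd (Finset.mem_univ j) h
      _ ≤ ∑ _j : Fin n, (1 : ℝ) := Finset.sum_le_sum fun j _ => hCdiag j
      _ = (n : ℝ) := by simp
  -- Chebyshev step
  have hWnn : ∀ x : Fin N → Ω, 0 ≤ ∏ i, w i (x i) :=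
    fun x => Finset.prod_nonneg fun i _ => hw0 i (x i)
  have h1 : c ^ 2 * (∑ x ∈ Finset.univ.filter (fun x : Fin N → Ω => c ≤ |∑ j, Y j x|),
      ∏ i, w i (x i)) ≤ ∑ x : Fin N → Ω, (∏ i, w i (x i)) * (∑ j, Y j x) ^ 2 := by
    rw [Finset.mul_sum]
    refine le_trans (Finset.sum_le_sum ?_)
      (Finset.sum_le_sum_of_subset_of_nonneg (Finset.filter_subset _ _) ?_)
    · intro x hx
      have hPx : c ≤ |∑ j, Y j x| := (Finset.mem_filter.mp hx).2
      have h2 : c ^ 2 ≤ (∑ j, Y j x) ^ 2 := by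
        calc c ^ 2 ≤ |∑ j, Y j x| ^ 2 := pow_le_pow_left₀ hc.le hPx 2
          _ = (∑ j, Y j x) ^ 2 := sq_abs _
      rw [mul_comm]
      exact mul_le_mul_of_nonneg_left h2 (hWnn x)
    · intro x _ _
      exact mul_nonneg (hWnn x) (sq_nonneg _)
  rw [le_div_iff₀ (by positivity : (0:ℝ) < c ^ 2)]
  calc (∑ x ∈ Finset.univ.filter (fun x : Fin N → Ω =>
        c ≤ |∑ j : Fin n, ((if x (e j) = x₀ then (1:ℝ) else 0) - w (e j) x₀)|),
      ∏ i, w i (x i)) * c ^ 2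
      = c ^ 2 * (∑ x ∈ Finset.univ.filter (fun x : Fin N → Ω => c ≤ |∑ j, Y j x|),
          ∏ i, w i (x i)) := by rw [mul_comm]
    _ ≤ _ := le_trans h1 key

noncomputable def Tf {Ω : Type*} [Fintype Ω] [DecidableEq Ω] (m : ℕ → EuclideanSpace ℝ Ω)
    (f : ℕ → ℕ) (x₀ : Ω) (ω : ℕ → Ω) (n : ℕ) : ℝ :=
  ∑ j ∈ Finset.range n, ((if ω (f j) = x₀ then (1:ℝ) else 0) - m (f j) x₀)

def Af {Ω : Type*} [Fintype Ω] [DecidableEq Ω] (m : ℕ → EuclideanSpace ℝ Ω)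
    (f : ℕ → ℕ) (x₀ : Ω) (r k : ℕ) : Set (ℕ → Ω) :=
  {ω | (k:ℝ)^2 / ((r:ℝ)+1) ≤ |Tf m f x₀ ω (k^2)|}

lemma aux_BC {α : Type*} [MeasurableSpace α] (μ : MeasureTheory.Measure α) (s : ℕ → Set α)
    (C : ℝ) (hC : 0 ≤ C) (h0 : μ (s 0) ≠ ⊤)
    (hb : ∀ k : ℕ, μ (s (k+1)) ≤ ENNReal.ofReal (C * (1/((k:ℝ)+1)^2))) :
    μ (limsup s atTop) = 0 := by
  apply measure_limsup_atTop_eq_zero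
  rw [tsum_eq_zero_add' (f := fun k => μ (s k)) ENNReal.summable]
  apply ENNReal.add_ne_top.mpr
  constructor
  · exact h0
  · apply ne_top_of_le_ne_top ?_ (ENNReal.tsum_le_tsum hb)
    have hsum1 : Summable (fun k : ℕ => 1/((k:ℝ)+1)^2) := by
      have h1 : Summable (fun k : ℕ => 1/((k:ℝ))^2) :=
        Real.summable_one_div_nat_pow.mpr one_lt_two
      have h2 := (summable_nat_add_iff 1).mpr h1
      apply h2.congr
      intro k; push_cast; ring
    have hsum : Summable (fun k : ℕ => C * (1/((k:ℝ)+1)^2)) := hsum1.mul_left _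
    rw [← ENNReal.ofReal_tsum_of_nonneg (fun k => by positivity) hsum]
    exact ENNReal.ofReal_ne_top

end AuxLemmas

set_option maxHeartbeats 2000000 in
/-- If `p` is a cluster point of the sequence of measures `m`, then there is
a selection rule selecting infinitely many indices along which, `IT(m)`-almost surely, the
relative frequencies of the selected subsequence have `{p}` as their set of cluster points. -/
theorem stmt8 {Ω : Type*} [Fintype Ω] [DecidableEq Ω] [MeasurableSpace Ω]
    [MeasurableSingletonClass Ω] (hcard : 1 < Fintype.card Ω)
    (m : ℕ → EuclideanSpace ℝ Ω) (hm : ∀ i, m i ∈ probVec Ω)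
    (p : EuclideanSpace ℝ Ω) (hp : p ∈ probVec Ω) (hcp : MapClusterPt p atTop m) :
    ∃ S : ℕ → Bool, {i | S i = true}.Infinite ∧
      ∀ μ : Measure (ℕ → Ω), IsIT m μ →
        μ {ω | clusterPts (relFreq fun n => ω (Nat.nth (fun i => S i = true) n)) = {p}} = 1 := by
  classical
  -- extract a subsequence converging to `p`
  have hfreq : ∀ r : ℕ, ∃ᶠ k in atTop, dist (m k) p < 1 / ((r : ℝ) + 1) := by
    intro r
    have h1 := mapClusterPt_iff_frequently.mp hcp (Metric.ball p (1 / ((r : ℝ) + 1)))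
      (Metric.ball_mem_nhds _ (by positivity))
    simpa [Metric.mem_ball] using h1
  obtain ⟨f, hfmono, hfd⟩ := Filter.extraction_forall_of_frequently hfreq
  have hmf : Tendsto (fun j => m (f j)) atTop (𝓝 p) := by
    rw [tendsto_iff_dist_tendsto_zero]
    exact squeeze_zero (fun j => dist_nonneg) (fun j => (hfd j).le)
      tendsto_one_div_add_atTop_nhds_zero_nat
  have hq : ∀ x₀ : Ω, Tendsto (fun j => m (f j) x₀) atTop (𝓝 (p x₀)) := by
    intro x₀
    have hc : Continuous fun v : EuclideanSpace ℝ Ω => v x₀ :=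
      (continuous_apply x₀).comp (PiLp.continuous_ofLp 2 fun _ : Ω => ℝ)
    exact (hc.tendsto p).comp hmf
  have hpred : (fun i => decide (i ∈ Set.range f) = true) = fun i => i ∈ Set.range f := by
    funext i; simp
  refine ⟨fun i => decide (i ∈ Set.range f), ?_, ?_⟩
  · have hseteq : {i | decide (i ∈ Set.range f) = true} = Set.range f := by
      ext i; simp
    rw [hseteq]
    exact Set.infinite_range_of_injective hfmono.injective
  intro μ hμ
  have hsetrw : {ω : ℕ → Ω | clusterPts
        (relFreq fun n => ω (Nat.nth (fun i => decide (i ∈ Set.range f) = true) n)) = {p}}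
      = {ω : ℕ → Ω | clusterPts (relFreq fun n => ω (f n)) = {p}} := by
    apply Set.ext; intro ω
    rw [hpred, aux_nth f hfmono]
  rw [hsetrw]
  have hμuniv : μ Set.univ = 1 := by
    have h0 := hμ 0 Fin.elim0
    simpa using h0
  -- measure bound on the bad events
  have hAbound : ∀ (x₀ : Ω) (r k : ℕ), 1 ≤ k →
      μ (Af m f x₀ r k) ≤ ENNReal.ofReal (((r:ℝ)+1)^2 / (k:ℝ)^2) := by
    intro x₀ r k hk
    have hkR : (0:ℝ) < (k:ℝ) := by exact_mod_cast hk
    set c : ℝ := (k:ℝ)^2 / ((r:ℝ)+1) with hcdef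
    have hc : 0 < c := by positivity
    set n : ℕ := k^2 with hn
    set N : ℕ := f n with hN
    have hfj : ∀ j : Fin n, f (j:ℕ) < N := fun j => hfmono j.2
    set e : Fin n → Fin N := fun j => ⟨f (j:ℕ), hfj j⟩ with he
    have heinj : Function.Injective e := by
      intro a b hab
      exact Fin.ext (hfmono.injective (congrArg Fin.val hab))
    set E : Finset (Fin N → Ω) := Finset.univ.filter (fun x : Fin N → Ω =>
      c ≤ |∑ j : Fin n, ((if x (e j) = x₀ then (1:ℝ) else 0) - m ((e j):ℕ) x₀)|) with hE
    have hAset : Af m f x₀ r k = {ω : ℕ → Ω | (fun i : Fin N => ω (i:ℕ)) ∈ E} := by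
      ext ω
      simp only [Af, hE, he, Set.mem_setOf_eq, Finset.mem_filter, Finset.mem_univ, true_and,
        Fin.val_mk]
      have hsum : ∑ j : Fin n, ((if ω (f (j:ℕ)) = x₀ then (1:ℝ) else 0) - m (f (j:ℕ)) x₀)
          = Tf m f x₀ ω n := by
        rw [Tf]
        exact Fin.sum_univ_eq_sum_range
          (fun j => (if ω (f j) = x₀ then (1:ℝ) else 0) - m (f j) x₀) n
      rw [hsum]
    rw [hAset, aux_measure_event m hm hμ N E]
    apply ENNReal.ofReal_le_ofReal
    have hcheb := aux_cheb (fun (i : Fin N) a => m (i:ℕ) a)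
      (fun i a => (hm _).1 a) (fun i => (hm _).2) e heinj x₀ c hc
    refine le_trans (le_of_eq ?_) (le_trans hcheb (le_of_eq ?_))
    · rfl
    · rw [hcdef, hn]
      have hk0 : (k:ℝ) ≠ 0 := ne_of_gt hkR
      have hr0 : ((r:ℝ)+1) ≠ 0 := by positivity
      push_cast
      field_simp
  -- Borel–Cantelli
  have hBC : ∀ (x₀ : Ω) (r : ℕ), μ (limsup (fun k => Af m f x₀ r k) atTop) = 0 := by
    intro x₀ r
    apply aux_BC μ _ (((r:ℝ)+1)^2) (by positivity)
    · exact ne_top_of_le_ne_top ENNReal.one_ne_top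
        (le_trans (measure_mono (Set.subset_univ _)) (le_of_eq hμuniv))
    · intro k
      refine le_trans (hAbound x₀ r (k+1) (Nat.le_add_left 1 k)) (le_of_eq ?_)
      congr 1
      push_cast
      ring
  set Bad : Set (ℕ → Ω) := ⋃ x₀ : Ω, ⋃ r : ℕ, limsup (fun k => Af m f x₀ r k) atTop with hBad
  have hBad0 : μ Bad = 0 :=
    measure_iUnion_null fun x₀ => measure_iUnion_null fun r => hBC x₀ r
  -- almost-sure convergence of relative frequencies
  have hgood : ∀ ω : ℕ → Ω, ω ∉ Bad → clusterPts (relFreq fun n => ω (f n)) = {p} := by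
    intro ω hω
    have hcoord : ∀ x₀ : Ω,
        Tendsto (fun n => relFreq (fun j => ω (f j)) n x₀) atTop (𝓝 (p x₀)) := by
      intro x₀
      have hsq : Tendsto (fun k : ℕ => |Tf m f x₀ ω (k^2)| / (k:ℝ)^2) atTop (𝓝 0) := by
        rw [Metric.tendsto_atTop]
        intro ε hε
        obtain ⟨r, hr⟩ := exists_nat_one_div_lt hε
        have hnot : ω ∉ limsup (fun k => Af m f x₀ r k) atTop := by
          intro hmem
          exact hω (Set.mem_iUnion.mpr ⟨x₀, Set.mem_iUnion.mpr ⟨r, hmem⟩⟩)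
        rw [mem_limsup_iff_frequently_mem, Filter.not_frequently] at hnot
        obtain ⟨K, hK⟩ := Filter.eventually_atTop.mp hnot
        refine ⟨max K 1, fun k hk => ?_⟩
        have hk1 : 1 ≤ k := le_trans (le_max_right K 1) hk
        have hkK : K ≤ k := le_trans (le_max_left K 1) hk
        have hkR : (0:ℝ) < (k:ℝ) := by exact_mod_cast hk1
        have h1 : ¬ ((k:ℝ)^2 / ((r:ℝ)+1) ≤ |Tf m f x₀ ω (k^2)|) := by
          have h2 := hK k hkK
          simpa [Af] using h2
        push_neg at h1
        rw [Real.dist_eq, sub_zero]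
        have h2 : |Tf m f x₀ ω (k^2)| / (k:ℝ)^2 < 1/((r:ℝ)+1) := by
          rw [div_lt_iff₀ (by positivity)]
          calc |Tf m f x₀ ω (k^2)| < (k:ℝ)^2/((r:ℝ)+1) := h1
            _ = 1/((r:ℝ)+1) * (k:ℝ)^2 := by ring
        have habs : (0:ℝ) ≤ |Tf m f x₀ ω (k^2)| / (k:ℝ)^2 := by positivity
        rw [abs_of_nonneg habs]
        exact lt_trans h2 hr
      have hsqrt : Tendsto (fun n : ℕ => Nat.sqrt n) atTop atTop := by
        apply tendsto_atTop_atTop.mpr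
        intro b
        refine ⟨b*b, fun n hn => ?_⟩
        calc b = Nat.sqrt (b*b) := (Nat.sqrt_eq b).symm
          _ ≤ Nat.sqrt n := Nat.sqrt_le_sqrt hn
      have h2k : Tendsto (fun k : ℕ => (2*(k:ℝ)+1)/(k:ℝ)^2) atTop (𝓝 0) := by
        apply squeeze_zero' (g := fun k : ℕ => 3/(k:ℝ))
        · filter_upwards [eventually_ge_atTop 1] with k hk
          positivity
        · filter_upwards [eventually_ge_atTop 1] with k hk
          have hkR : (1:ℝ) ≤ (k:ℝ) := by exact_mod_cast hk
          rw [div_le_div_iff₀ (by positivity) (by positivity)]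
          nlinarith
        · exact tendsto_const_div_atTop_nhds_zero_nat 3
      have haux : Tendsto (fun k : ℕ => |Tf m f x₀ ω (k^2)|/(k:ℝ)^2 + (2*(k:ℝ)+1)/(k:ℝ)^2)
          atTop (𝓝 0) := by simpa using hsq.add h2k
      have hT0 : Tendsto (fun n : ℕ => Tf m f x₀ ω n / (n:ℝ)) atTop (𝓝 0) := by
        apply squeeze_zero_norm' ?_ (haux.comp hsqrt)
        filter_upwards [eventually_ge_atTop 1] with n hn
        simp only [Function.comp_apply]
        set k := Nat.sqrt n with hkdef
        have hk1 : 1 ≤ k := Nat.sqrt_pos.mpr hn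
        have hk2 : k^2 ≤ n := Nat.sqrt_le' n
        have hk3 : n ≤ k^2 + 2*k := by
          have h := Nat.lt_succ_sqrt n
          simp only [Nat.succ_eq_add_one, ← hkdef] at h
          nlinarith [h]
        have hkR : (1:ℝ) ≤ (k:ℝ) := by exact_mod_cast hk1
        have hk2R : ((k:ℝ))^2 ≤ (n:ℝ) := by exact_mod_cast hk2
        have hk3R : (n:ℝ) ≤ ((k:ℝ))^2 + 2*(k:ℝ) := by exact_mod_cast hk3
        have hnR : (0:ℝ) < (n:ℝ) := by exact_mod_cast hn
        have hstep : |Tf m f x₀ ω n - Tf m f x₀ ω (k^2)| ≤ (n:ℝ) - ((k:ℝ))^2 := by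
          have hdiff : Tf m f x₀ ω n - Tf m f x₀ ω (k^2)
              = ∑ j ∈ Finset.Ico (k^2) n, ((if ω (f j) = x₀ then (1:ℝ) else 0) - m (f j) x₀) := by
            simp only [Tf]
            rw [Finset.sum_Ico_eq_sub _ hk2]
          rw [hdiff]
          calc |∑ j ∈ Finset.Ico (k^2) n, ((if ω (f j) = x₀ then (1:ℝ) else 0) - m (f j) x₀)|
              ≤ ∑ j ∈ Finset.Ico (k^2) n, |(if ω (f j) = x₀ then (1:ℝ) else 0) - m (f j) x₀| :=
                Finset.abs_sum_le_sum_abs _ _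
            _ ≤ ∑ _j ∈ Finset.Ico (k^2) n, (1:ℝ) := by
                apply Finset.sum_le_sum
                intro j _
                have h1 := (hm (f j)).1 x₀
                have h2 : m (f j) x₀ ≤ 1 := by
                  rw [← (hm (f j)).2]
                  exact Finset.single_le_sum (fun a _ => (hm (f j)).1 a) (Finset.mem_univ x₀)
                rw [abs_le]
                constructor <;> split_ifs <;> linarith
            _ = ((n - k^2 : ℕ) : ℝ) := by
                rw [Finset.sum_const, Nat.card_Ico]; simp
            _ = (n:ℝ) - ((k:ℝ))^2 := by
                push_cast [hk2]; ring
        have hT2 : |Tf m f x₀ ω n| ≤ |Tf m f x₀ ω (k^2)| + (2*(k:ℝ)+1) := by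
          calc |Tf m f x₀ ω n| = |Tf m f x₀ ω (k^2) + (Tf m f x₀ ω n - Tf m f x₀ ω (k^2))| := by ring_nf
            _ ≤ |Tf m f x₀ ω (k^2)| + |Tf m f x₀ ω n - Tf m f x₀ ω (k^2)| := abs_add_le _ _
            _ ≤ |Tf m f x₀ ω (k^2)| + ((n:ℝ) - (k:ℝ)^2) := by linarith [hstep]
            _ ≤ _ := by linarith [hk3R]
        rw [Real.norm_eq_abs, abs_div, abs_of_nonneg hnR.le]
        have hkpos : (0:ℝ) < (k:ℝ)^2 := by positivity
        have hmain : |Tf m f x₀ ω n| / (n:ℝ) ≤ (|Tf m f x₀ ω (k^2)| + (2*(k:ℝ)+1)) / (k:ℝ)^2 := by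
          apply div_le_div₀ (by positivity) hT2 hkpos hk2R
        calc |Tf m f x₀ ω n| / (n:ℝ) ≤ (|Tf m f x₀ ω (k^2)| + (2*(k:ℝ)+1)) / (k:ℝ)^2 := hmain
          _ = |Tf m f x₀ ω (k^2)|/(k:ℝ)^2 + (2*(k:ℝ)+1)/(k:ℝ)^2 := by rw [add_div]
      have hces : Tendsto (fun n : ℕ => ((n:ℝ))⁻¹ * ∑ j ∈ Finset.range n, m (f j) x₀)
          atTop (𝓝 (p x₀)) := (hq x₀).cesaro
      have hrel : ∀ n : ℕ, relFreq (fun j => ω (f j)) n x₀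
          = Tf m f x₀ ω n / (n:ℝ) + ((n:ℝ))⁻¹ * ∑ j ∈ Finset.range n, m (f j) x₀ := by
        intro n
        simp only [relFreq]
        rw [Finset.card_filter]
        simp only [Tf]
        rw [Finset.sum_sub_distrib]
        push_cast
        ring
      have hfin := hT0.add hces
      rw [zero_add] at hfin
      exact hfin.congr (fun n => (hrel n).symm)
    exact aux_clusterPts (aux_tendsto_euclidean hcoord)
  refine le_antisymm ?_ ?_
  · rw [← hμuniv]; exact measure_mono (Set.subset_univ _)
  · calc (1:ℝ≥0∞) = μ Set.univ := hμuniv.symm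
      _ ≤ μ Bad + μ Badᶜ := by
          rw [← Set.union_compl_self Bad]
          exact measure_union_le _ _
      _ = μ Badᶜ := by rw [hBad0, zero_add]
      _ ≤ μ {ω : ℕ → Ω | clusterPts (relFreq fun n => ω (f n)) = {p}} :=
          measure_mono fun ω hω => hgood ω hω
end

section
/- Let Ω be a finite set with k := |Ω| > 1 and let M ⊆ Δ^k be nonempty. For k' ∈ ℕ let T^{k'} : Ω^ℕ → Ω^ℕ denote the left-shift-by-k' operator, T^{k'}(ω_1, ω_2, …) := (ω_{k'+1}, ω_{k'+2}, …). Then the set function P̲_M(A) := inf{IT(m)(A) : m ∈ M^ℕ}, defined for A in the product σ-algebra on Ω^ℕ, is stationary: P̲_M((T^{k'})^{-1}(A)) = P̲_M(A) for all measurable A and all k' ∈ ℕ. Moreover, for any nonempty closed connected subset N of the closed convex hull of M, the set function P̲_{M→N}(A) := inf{IT(m)(A) : m ∈ M^ℕ_{→N}} is likewise stationary. -/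
open MeasureTheory Filter Topology

set_option linter.unusedSectionVars false

section PCyl

variable {Ω : Type*} [Fintype Ω] [DecidableEq Ω] [MeasurableSpace Ω] [MeasurableSingletonClass Ω]

/-- A point cylinder: the set of sequences with a prescribed prefix of length `n`. -/
def pcyl (n : ℕ) (x : Fin n → Ω) : Set (ℕ → Ω) := {ω | ∀ i : Fin n, ω (i : ℕ) = x i}

lemma measurableSet_pcyl (n : ℕ) (x : Fin n → Ω) : MeasurableSet (pcyl n x) := by
  have : pcyl n x = ⋂ i : Fin n, (fun ω : ℕ → Ω => ω (i : ℕ)) ⁻¹' {x i} := by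
    ext ω; simp [pcyl]
  rw [this]
  exact MeasurableSet.iInter fun i => (measurable_pi_apply _) (measurableSet_singleton _)

/-- The collection of all point cylinders. -/
def pcylSet (Ω : Type*) [Fintype Ω] : Set (Set (ℕ → Ω)) :=
  {S | ∃ n, ∃ x : Fin n → Ω, S = pcyl n x}

lemma isPiSystem_pcylSet : IsPiSystem (pcylSet Ω) := by
  have key : ∀ {a b : ℕ} (y : Fin a → Ω) (z : Fin b → Ω), a ≤ b →
      (pcyl a y ∩ pcyl b z).Nonempty → pcyl a y ∩ pcyl b z = pcyl b z := by
    rintro a b y z hab ⟨ω₀, h₀y, h₀z⟩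
    apply Set.inter_eq_self_of_subset_right
    intro ω hω i
    have hlt : (i : ℕ) < b := lt_of_lt_of_le i.2 hab
    have hyz : y i = z ⟨i, hlt⟩ := by
      rw [← h₀y i, ← h₀z ⟨i, hlt⟩]
    rw [hyz]
    exact hω ⟨i, hlt⟩
  rintro S ⟨n, x, rfl⟩ T ⟨n', x', rfl⟩ hne
  rcases le_total n n' with h | h
  · rw [key x x' h hne]; exact ⟨n', x', rfl⟩
  · rw [Set.inter_comm, key x' x h (by rwa [Set.inter_comm] at hne)]
    exact ⟨n, x, rfl⟩

lemma eval_mem_generateFrom (j : ℕ) (x : Ω) :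
    MeasurableSet[MeasurableSpace.generateFrom (pcylSet Ω)]
      ((fun ω : ℕ → Ω => ω j) ⁻¹' {x}) := by
  have hset : (fun ω : ℕ → Ω => ω j) ⁻¹' {x} =
      ⋃ y : {y : Fin (j + 1) → Ω // y (Fin.last j) = x}, pcyl (j + 1) y.1 := by
    ext ω
    simp only [Set.mem_preimage, Set.mem_singleton_iff, Set.mem_iUnion]
    constructor
    · intro h
      refine ⟨⟨fun i => ω (i : ℕ), ?_⟩, fun i => rfl⟩
      simpa [Fin.val_last] using h
    · rintro ⟨⟨y, hy⟩, hω⟩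
      have := hω (Fin.last j)
      simp only [Fin.val_last] at this
      rw [this, hy]
  rw [hset]
  exact MeasurableSet.iUnion fun y =>
    MeasurableSpace.measurableSet_generateFrom ⟨j + 1, y.1, rfl⟩

lemma generateFrom_pcylSet :
    MeasurableSpace.generateFrom (pcylSet Ω) = (MeasurableSpace.pi :
      MeasurableSpace (ℕ → Ω)) := by
  apply le_antisymm
  · apply MeasurableSpace.generateFrom_le
    rintro S ⟨n, x, rfl⟩
    exact measurableSet_pcyl n x
  · refine iSup_le fun j => ?_
    rintro s ⟨t, _, rfl⟩
    have : (fun ω : ℕ → Ω => ω j) ⁻¹' t = ⋃ x ∈ t, (fun ω : ℕ → Ω => ω j) ⁻¹' {x} := by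
      ext ω; simp
    rw [this]
    exact MeasurableSet.biUnion (Set.to_countable t) fun x _ => eval_mem_generateFrom j x

/-- Two probability measures agreeing on all point cylinders are equal. -/
lemma measure_eq_of_pcyl {μ ν : Measure (ℕ → Ω)}
    (h : ∀ (n : ℕ) (x : Fin n → Ω), μ (pcyl n x) = ν (pcyl n x))
    (hμ : μ Set.univ = 1) (hν : ν Set.univ = 1) : μ = ν := by
  have : IsFiniteMeasure μ := ⟨by rw [hμ]; exact ENNReal.one_lt_top⟩
  refine ext_of_generate_finite (pcylSet Ω) generateFrom_pcylSet.symm isPiSystem_pcylSet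
    ?_ (by rw [hμ, hν])
  rintro s ⟨n, x, rfl⟩
  exact h n x

end PCyl

section IT

variable {Ω : Type*} [Fintype Ω] [DecidableEq Ω] [MeasurableSpace Ω] [MeasurableSingletonClass Ω]

lemma IsIT.pcyl_eq {m : ℕ → EuclideanSpace ℝ Ω} {μ : Measure (ℕ → Ω)} (hμ : IsIT m μ)
    (n : ℕ) (x : Fin n → Ω) :
    μ (pcyl n x) = ∏ i : Fin n, ENNReal.ofReal (m i.val (x i)) := hμ n x

lemma IsIT.univ_eq {m : ℕ → EuclideanSpace ℝ Ω} {μ : Measure (ℕ → Ω)} (hμ : IsIT m μ) :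
    μ Set.univ = 1 := by
  have := hμ 0 Fin.elim0
  simpa using this

lemma IsIT.offset {m : ℕ → EuclideanSpace ℝ Ω} {μ : Measure (ℕ → Ω)}
    (hm : ∀ i, m i ∈ probVec Ω) (hμ : IsIT m μ) (k' n : ℕ) (x : Fin n → Ω) :
    μ {ω : ℕ → Ω | ∀ i : Fin n, ω ((i : ℕ) + k') = x i} =
      ∏ i : Fin n, ENNReal.ofReal (m ((i : ℕ) + k') (x i)) := by
  have hset : {ω : ℕ → Ω | ∀ i : Fin n, ω ((i : ℕ) + k') = x i} =
      ⋃ y : Fin k' → Ω, pcyl (k' + n) (Fin.append y x) := by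
    ext ω
    simp only [Set.mem_setOf_eq, Set.mem_iUnion]
    constructor
    · intro h
      refine ⟨fun j => ω (j : ℕ), fun i => ?_⟩
      induction i using Fin.addCases with
      | left j => simp [pcyl, Fin.append_left]
      | right j =>
        simp only [Fin.append_right, Fin.coe_natAdd]
        rw [Nat.add_comm]
        exact h j
    · rintro ⟨y, hy⟩ i
      have := hy (Fin.natAdd k' i)
      simp only [Fin.append_right, Fin.coe_natAdd] at this
      rw [Nat.add_comm]
      exact this
  have hdisj : Pairwise (Function.onFun Disjoint
      fun y : Fin k' → Ω => pcyl (k' + n) (Fin.append y x)) := by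
    intro y y' hne
    rw [Function.onFun, Set.disjoint_left]
    intro ω hω hω'
    apply hne
    funext j
    have h1 := hω (Fin.castAdd n j)
    have h2 := hω' (Fin.castAdd n j)
    simp only [Fin.append_left] at h1 h2
    rw [← h1, ← h2]
  rw [hset, measure_iUnion hdisj fun y => measurableSet_pcyl _ _, tsum_fintype]
  have hterm : ∀ y : Fin k' → Ω, μ (pcyl (k' + n) (Fin.append y x)) =
      (∏ j : Fin k', ENNReal.ofReal (m (j : ℕ) (y j))) *
        ∏ i : Fin n, ENNReal.ofReal (m (k' + (i : ℕ)) (x i)) := by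
    intro y
    rw [hμ.pcyl_eq, Fin.prod_univ_add]
    congr 1
    · exact Finset.prod_congr rfl fun j _ => by rw [Fin.append_left, Fin.coe_castAdd]
    · exact Finset.prod_congr rfl fun i _ => by rw [Fin.append_right, Fin.coe_natAdd]
  rw [Finset.sum_congr rfl fun y _ => hterm y, ← Finset.sum_mul]
  have hone : (∑ y : Fin k' → Ω, ∏ j : Fin k', ENNReal.ofReal (m (j : ℕ) (y j))) = 1 := by
    rw [← Fintype.piFinset_univ, ← Finset.prod_univ_sum
      (fun _ : Fin k' => (Finset.univ : Finset Ω)) (fun j a => ENNReal.ofReal (m (j : ℕ) a))]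
    have : ∀ j : Fin k', (∑ a : Ω, ENNReal.ofReal (m (j : ℕ) a)) = 1 := by
      intro j
      rw [← ENNReal.ofReal_sum_of_nonneg fun a _ => (hm (j : ℕ)).1 a, (hm (j : ℕ)).2]
      exact ENNReal.ofReal_one
    rw [Finset.prod_congr rfl fun j _ => this j, Finset.prod_const_one]
  rw [hone, one_mul]
  exact Finset.prod_congr rfl fun i _ => by rw [Nat.add_comm]

lemma shift_measurable (k' : ℕ) : Measurable (fun (ω : ℕ → Ω) (n : ℕ) => ω (n + k')) :=
  measurable_pi_lambda _ fun n => measurable_pi_apply _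

/-- The key stationarity identity: shifting the observation window corresponds to
shifting the sequence of marginals. -/
lemma map_shift_eq {m : ℕ → EuclideanSpace ℝ Ω} {μ ν : Measure (ℕ → Ω)} (k' : ℕ)
    (hm : ∀ i, m i ∈ probVec Ω) (hμ : IsIT m μ) (hν : IsIT (fun i => m (i + k')) ν)
    {A : Set (ℕ → Ω)} (hA : MeasurableSet A) :
    μ ((fun (ω : ℕ → Ω) (n : ℕ) => ω (n + k')) ⁻¹' A) = ν A := by
  have hmap : μ.map (fun (ω : ℕ → Ω) (n : ℕ) => ω (n + k')) = ν := by
    apply measure_eq_of_pcyl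
    · intro n x
      rw [Measure.map_apply (shift_measurable k') (measurableSet_pcyl n x)]
      have hpre : (fun (ω : ℕ → Ω) (n : ℕ) => ω (n + k')) ⁻¹' pcyl n x
          = {ω : ℕ → Ω | ∀ i : Fin n, ω ((i : ℕ) + k') = x i} := rfl
      rw [hpre, hμ.offset hm k' n x]
      exact (hν n x).symm
    · rw [Measure.map_apply (shift_measurable k') MeasurableSet.univ, Set.preimage_univ]
      exact hμ.univ_eq
    · exact hν.univ_eq
  rw [← hmap, Measure.map_apply (shift_measurable k') hA]

end IT

section CP

lemma clusterPts_comp_add {X : Type*} [TopologicalSpace X] (a : ℕ → X) (k : ℕ) :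
    clusterPts (fun n => a (n + k)) = clusterPts a := by
  ext c
  show MapClusterPt c atTop (fun n => a (n + k)) ↔ MapClusterPt c atTop a
  rw [mapClusterPt_def, mapClusterPt_def,
    show (fun n => a (n + k)) = a ∘ (fun n => n + k) from rfl, ← Filter.map_map,
    Filter.map_add_atTop_eq_nat]

lemma mapClusterPt_of_sub_tendsto {E : Type*} [NormedAddCommGroup E] {a b : ℕ → E} {c : E}
    (h : Filter.Tendsto (fun n => b n - a n) atTop (nhds 0))
    (ha : MapClusterPt c atTop a) : MapClusterPt c atTop b := by
  rw [mapClusterPt_iff_frequently] at ha ⊢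
  intro s hs
  obtain ⟨ε, hε, hball⟩ := Metric.mem_nhds_iff.1 hs
  have h1 : ∀ᶠ n in atTop, ‖b n - a n‖ < ε / 2 := by
    have := Metric.tendsto_nhds.1 h (ε / 2) (by positivity)
    simpa [dist_zero_right] using this
  have h2 := ha (Metric.ball c (ε / 2)) (Metric.ball_mem_nhds _ (by positivity))
  refine (h2.and_eventually h1).mono ?_
  rintro n ⟨hn1, hn2⟩
  apply hball
  rw [Metric.mem_ball]
  calc dist (b n) c ≤ dist (b n) (a n) + dist (a n) c := dist_triangle _ _ _
    _ < ε / 2 + ε / 2 := by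
        refine add_lt_add ?_ (Metric.mem_ball.1 hn1)
        rw [dist_eq_norm]; exact hn2
    _ = ε := add_halves ε

lemma clusterPts_congr_of_sub_tendsto {E : Type*} [NormedAddCommGroup E] {a b : ℕ → E}
    (h : Filter.Tendsto (fun n => b n - a n) atTop (nhds 0)) :
    clusterPts a = clusterPts b := by
  ext c
  constructor
  · exact fun hc => mapClusterPt_of_sub_tendsto h hc
  · refine fun hc => mapClusterPt_of_sub_tendsto ?_ hc
    have : (fun n => a n - b n) = fun n => -(b n - a n) := by funext n; abel
    rw [this]
    simpa using h.neg

end CP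

section Cesaro

variable {Ω : Type*} [Fintype Ω] [DecidableEq Ω]

lemma norm_le_one_of_probVec {p : EuclideanSpace ℝ Ω} (hp : p ∈ probVec Ω) : ‖p‖ ≤ 1 := by
  obtain ⟨hnn, hsum⟩ := hp
  have hle : ∀ x, p x ≤ 1 := by
    intro x
    calc p x ≤ ∑ y, p y := Finset.single_le_sum (fun y _ => hnn y) (Finset.mem_univ x)
      _ = 1 := hsum
  rw [EuclideanSpace.norm_eq]
  have h2 : ∑ x, ‖p x‖ ^ 2 ≤ 1 := by
    calc ∑ x, ‖p x‖ ^ 2 = ∑ x, p x * p x := by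
          refine Finset.sum_congr rfl fun x _ => ?_
          rw [Real.norm_eq_abs, abs_of_nonneg (hnn x), sq]
      _ ≤ ∑ x, 1 * p x :=
          Finset.sum_le_sum fun x _ => mul_le_mul_of_nonneg_right (hle x) (hnn x)
      _ = 1 := by simp [hsum]
  calc Real.sqrt (∑ x, ‖p x‖ ^ 2) ≤ Real.sqrt 1 := Real.sqrt_le_sqrt h2
    _ = 1 := Real.sqrt_one

/-- Shifting a bounded sequence does not change the cluster points of its Cesàro averages. -/
lemma clusterPts_cesaro_shift {m : ℕ → EuclideanSpace ℝ Ω} (hm : ∀ i, ‖m i‖ ≤ 1) (k' : ℕ) :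
    clusterPts (cesaro fun i => m (i + k')) = clusterPts (cesaro m) := by
  have hS : ∀ t : ℕ, ‖∑ i ∈ Finset.range t, m i‖ ≤ t := by
    intro t
    calc ‖∑ i ∈ Finset.range t, m i‖ ≤ ∑ i ∈ Finset.range t, ‖m i‖ := norm_sum_le _ _
      _ ≤ ∑ _i ∈ Finset.range t, (1 : ℝ) := Finset.sum_le_sum fun i _ => hm i
      _ = t := by simp
  have key : Filter.Tendsto
      (fun n => cesaro (fun i => m (i + k')) n - cesaro m (n + k')) atTop (nhds 0) := by
    rw [tendsto_zero_iff_norm_tendsto_zero]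
    apply squeeze_zero' (g := fun n : ℕ => 2 * k' / n)
    · exact Filter.Eventually.of_forall fun n => norm_nonneg _
    · filter_upwards [Filter.eventually_ge_atTop 1] with n hn
      have hn0 : (0 : ℝ) < n := by exact_mod_cast hn
      have hsum : ∑ i ∈ Finset.range n, m (i + k') =
          (∑ i ∈ Finset.range (k' + n), m i) - ∑ i ∈ Finset.range k', m i := by
        rw [Finset.sum_range_add]
        rw [Finset.sum_congr rfl fun i _ => show m (k' + i) = m (i + k') by rw [Nat.add_comm]]
        abel
      have hd : cesaro (fun i => m (i + k')) n - cesaro m (n + k') =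
          ((n : ℝ)⁻¹ - ((n : ℝ) + (k' : ℝ))⁻¹) • (∑ i ∈ Finset.range (k' + n), m i)
            - (n : ℝ)⁻¹ • ∑ i ∈ Finset.range k', m i := by
        show (n : ℝ)⁻¹ • (∑ i ∈ Finset.range n, m (i + k')) -
            ((n + k' : ℕ) : ℝ)⁻¹ • ∑ i ∈ Finset.range (n + k'), m i = _
        rw [hsum, Nat.add_comm n k']
        push_cast
        module
      rw [hd]
      have hcoef : (0 : ℝ) ≤ (n : ℝ)⁻¹ - ((n : ℝ) + (k' : ℝ))⁻¹ := by
        have : ((n : ℝ) + (k' : ℝ))⁻¹ ≤ (n : ℝ)⁻¹ := by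
          apply inv_anti₀ hn0
          linarith [Nat.cast_nonneg (α := ℝ) k']
        linarith
      have hSN : ‖∑ i ∈ Finset.range (k' + n), m i‖ ≤ (k' : ℝ) + n := by
        have := hS (k' + n); push_cast at this; exact this
      have hSk : ‖∑ i ∈ Finset.range k', m i‖ ≤ (k' : ℝ) := hS k'
      calc ‖((n : ℝ)⁻¹ - ((n : ℝ) + (k' : ℝ))⁻¹) • (∑ i ∈ Finset.range (k' + n), m i)
            - (n : ℝ)⁻¹ • ∑ i ∈ Finset.range k', m i‖
          ≤ ‖((n : ℝ)⁻¹ - ((n : ℝ) + (k' : ℝ))⁻¹) • (∑ i ∈ Finset.range (k' + n), m i)‖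
            + ‖(n : ℝ)⁻¹ • ∑ i ∈ Finset.range k', m i‖ := norm_sub_le _ _
        _ ≤ ((n : ℝ)⁻¹ - ((n : ℝ) + (k' : ℝ))⁻¹) * ((k' : ℝ) + n)
            + (n : ℝ)⁻¹ * (k' : ℝ) := by
            rw [norm_smul, norm_smul, Real.norm_eq_abs, Real.norm_eq_abs,
              abs_of_nonneg hcoef, abs_of_nonneg (by positivity : (0:ℝ) ≤ (n:ℝ)⁻¹)]
            refine add_le_add ?_ ?_
            · exact mul_le_mul_of_nonneg_left hSN hcoef
            · exact mul_le_mul_of_nonneg_left hSk (by positivity)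
        _ = 2 * k' / n := by
            have hnk : (0 : ℝ) < (n : ℝ) + (k' : ℝ) := by positivity
            field_simp
            ring
    · exact tendsto_const_div_atTop_nhds_zero_nat (2 * (k' : ℝ))
  calc clusterPts (cesaro fun i => m (i + k'))
      = clusterPts (fun n => cesaro m (n + k')) := (clusterPts_congr_of_sub_tendsto key).symm
    _ = clusterPts (cesaro m) := clusterPts_comp_add (cesaro m) k'

end Cesaro

lemma biInf_eq_of {X : Type*} (S : Set X) (f g : X → ENNReal)
    (h1 : ∀ m ∈ S, ∃ m' ∈ S, f m = g m') (h2 : ∀ m' ∈ S, ∃ m ∈ S, f m = g m') :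
    ⨅ m ∈ S, f m = ⨅ m ∈ S, g m := by
  apply le_antisymm
  · refine le_iInf₂ fun m' hm' => ?_
    obtain ⟨m, hm, he⟩ := h2 m' hm'
    exact (iInf₂_le m hm).trans (le_of_eq he)
  · refine le_iInf₂ fun m hm => ?_
    obtain ⟨m', hm', he⟩ := h1 m hm
    exact (iInf₂_le m' hm').trans (le_of_eq he.symm)

/-- The lower probabilities `P̲_M` and `P̲_{M→N}` (lower envelopes of the
independent products over `M^ℕ`, resp. `M^ℕ_{→N}`) are stationary with respect to all
left-shift operators. -/
theorem stmt13 {Ω : Type*} [Fintype Ω] [DecidableEq Ω] [MeasurableSpace Ω]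
    [MeasurableSingletonClass Ω] (hcard : 1 < Fintype.card Ω)
    (M : Set (EuclideanSpace ℝ Ω)) (hM : M.Nonempty) (hMsub : M ⊆ probVec Ω)
    (IT : (ℕ → EuclideanSpace ℝ Ω) → Measure (ℕ → Ω))
    (hIT : ∀ m : ℕ → EuclideanSpace ℝ Ω, (∀ i, m i ∈ M) → IsIT m (IT m)) :
    (∀ (A : Set (ℕ → Ω)), MeasurableSet A → ∀ k' : ℕ,
      (⨅ m ∈ {m : ℕ → EuclideanSpace ℝ Ω | ∀ i, m i ∈ M},
          IT m ((fun (ω : ℕ → Ω) (n : ℕ) => ω (n + k')) ⁻¹' A)) =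
        ⨅ m ∈ {m : ℕ → EuclideanSpace ℝ Ω | ∀ i, m i ∈ M}, IT m A) ∧
    (∀ N : Set (EuclideanSpace ℝ Ω), N.Nonempty → IsClosed N → IsConnected N →
      N ⊆ closure (convexHull ℝ M) →
      ∀ (A : Set (ℕ → Ω)), MeasurableSet A → ∀ k' : ℕ,
        (⨅ m ∈ {m : ℕ → EuclideanSpace ℝ Ω | (∀ i, m i ∈ M) ∧ clusterPts (cesaro m) = N},
            IT m ((fun (ω : ℕ → Ω) (n : ℕ) => ω (n + k')) ⁻¹' A)) =
          ⨅ m ∈ {m : ℕ → EuclideanSpace ℝ Ω | (∀ i, m i ∈ M) ∧ clusterPts (cesaro m) = N},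
            IT m A) := by
  have hprob : ∀ m : ℕ → EuclideanSpace ℝ Ω, (∀ i, m i ∈ M) → ∀ i, m i ∈ probVec Ω :=
    fun m h i => hMsub (h i)
  obtain ⟨p₀, hp₀⟩ := hM
  -- the prepend construction
  have hprepend : ∀ (k' : ℕ) (m' : ℕ → EuclideanSpace ℝ Ω), (∀ i, m' i ∈ M) →
      ∃ m : ℕ → EuclideanSpace ℝ Ω, (∀ i, m i ∈ M) ∧ (fun i => m (i + k')) = m' := by
    intro k' m' hm'
    refine ⟨fun i => if i < k' then p₀ else m' (i - k'), fun i => ?_, funext fun i => ?_⟩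
    · by_cases h : i < k' <;> simp [h, hp₀, hm' _]
    · have h : ¬ (i + k' < k') := by omega
      simp [h]
  constructor
  · intro A hA k'
    apply biInf_eq_of
    · intro m hm
      refine ⟨fun i => m (i + k'), fun i => hm _, ?_⟩
      exact map_shift_eq k' (hprob m hm) (hIT m hm) (hIT _ fun i => hm _) hA
    · intro m' hm'
      obtain ⟨m, hmM, hshift⟩ := hprepend k' m' hm'
      refine ⟨m, hmM, ?_⟩
      have hν : IsIT (fun i => m (i + k')) (IT m') := by rw [hshift]; exact hIT m' hm'
      exact map_shift_eq k' (hprob m hmM) (hIT m hmM) hν hA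
  · intro N _ _ _ _ A hA k'
    apply biInf_eq_of
    · rintro m ⟨hmM, hmN⟩
      refine ⟨fun i => m (i + k'), ⟨fun i => hmM _, ?_⟩, ?_⟩
      · rw [clusterPts_cesaro_shift (fun i => norm_le_one_of_probVec (hprob m hmM i)) k']
        exact hmN
      · exact map_shift_eq k' (hprob m hmM) (hIT m hmM) (hIT _ fun i => hmM _) hA
    · rintro m' ⟨hm'M, hm'N⟩
      obtain ⟨m, hmM, hshift⟩ := hprepend k' m' hm'M
      have hν : IsIT (fun i => m (i + k')) (IT m') := by rw [hshift]; exact hIT m' hm'M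
      refine ⟨m, ⟨hmM, ?_⟩, ?_⟩
      · rw [← clusterPts_cesaro_shift (fun i => norm_le_one_of_probVec (hprob m hmM i)) k',
          hshift]
        exact hm'N
      · exact map_shift_eq k' (hprob m hmM) (hIT m hmM) hν hA
end

section
/- Let Ω be a finite set with k := |Ω| > 1, let ω = (ω_1, ω_2, …) ∈ Ω^ℕ, let ℓ : Ω → ℝ, and let κ : ℕ → ℕ satisfy κ(n) → ∞ as n → ∞ and κ(n) ≤ n for all n. Define the estimator est_n := min{ (1/j)∑_{i=1}^j ℓ(ω_i) : κ(n) ≤ j ≤ n }. Then liminf_{n→∞} est_n = liminf_{n→∞} (1/n)∑_{i=1}^n ℓ(ω_i) = min{E_p[ℓ] : p ∈ CP(n ↦ r_n(ω))}, where E_p[ℓ] = ∑_{x ∈ Ω} ℓ(x)·p({x}). -/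
open MeasureTheory Filter Topology

section Aux

variable {Ω : Type*} [Fintype Ω] [DecidableEq Ω]

private lemma avg_eq_expect (ω : ℕ → Ω) (ℓ : Ω → ℝ) (n : ℕ) :
    (n : ℝ)⁻¹ * ∑ i ∈ Finset.range n, ℓ (ω i) = ∑ x, ℓ x * relFreq ω n x := by
  have h : ∑ i ∈ Finset.range n, ℓ (ω i)
      = ∑ x : Ω, (((Finset.range n).filter fun i => ω i = x).card : ℝ) * ℓ x := by
    rw [← Finset.sum_fiberwise_of_maps_to (g := ω) (t := Finset.univ)
      (fun i _ => Finset.mem_univ (ω i)) (fun i => ℓ (ω i))]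
    refine Finset.sum_congr rfl fun x _ => ?_
    rw [show ∑ i ∈ (Finset.range n).filter (fun i => ω i = x), ℓ (ω i)
        = ∑ _i ∈ (Finset.range n).filter (fun i => ω i = x), ℓ x from
      Finset.sum_congr rfl fun i hi => by rw [(Finset.mem_filter.mp hi).2]]
    rw [Finset.sum_const, nsmul_eq_mul]
  rw [h, Finset.mul_sum]
  refine Finset.sum_congr rfl fun x _ => ?_
  show (n : ℝ)⁻¹ * (_ * ℓ x) = ℓ x * (_ / (n : ℝ))
  rw [div_eq_mul_inv]
  ring

private lemma relFreq_mem_Icc (ω : ℕ → Ω) (n : ℕ) (x : Ω) :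
    relFreq ω n x ∈ Set.Icc (0 : ℝ) 1 := by
  show (((Finset.range n).filter fun i => ω i = x).card : ℝ) / n ∈ Set.Icc (0 : ℝ) 1
  constructor
  · exact div_nonneg (Nat.cast_nonneg _) (Nat.cast_nonneg _)
  · rcases Nat.eq_zero_or_pos n with h0 | hn
    · simp [relFreq, h0]
    · apply div_le_one_of_le₀
      · exact_mod_cast le_trans (Finset.card_filter_le _ _) (le_of_eq (Finset.card_range n))
      · positivity

end Aux

/-- The Walley–Fine estimator `est n = min{(1/j)∑_{i≤j} ℓ(ω_i) : κ(n) ≤ j ≤ n}`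
satisfies: its `liminf` equals the `liminf` of the gamble averages, which in turn equals the
minimum expectation of `ℓ` over the cluster points of the relative frequencies. -/
theorem stmt14 {Ω : Type*} [Fintype Ω] [DecidableEq Ω] (hcard : 1 < Fintype.card Ω)
    (ω : ℕ → Ω) (ℓ : Ω → ℝ) (κ : ℕ → ℕ)
    (hκ : Tendsto κ atTop atTop) (hκle : ∀ n, κ n ≤ n) :
    liminf (fun n : ℕ => sInf
        ((fun j : ℕ => (j : ℝ)⁻¹ * ∑ i ∈ Finset.range j, ℓ (ω i)) '' Set.Icc (κ n) n))
      atTop =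
      liminf (fun n : ℕ => (n : ℝ)⁻¹ * ∑ i ∈ Finset.range n, ℓ (ω i)) atTop ∧
    liminf (fun n : ℕ => (n : ℝ)⁻¹ * ∑ i ∈ Finset.range n, ℓ (ω i)) atTop =
      sInf ((fun p : EuclideanSpace ℝ Ω => ∑ x, ℓ x * p x) '' clusterPts (relFreq ω)) := by
  classical
  set a : ℕ → ℝ := fun n => (n : ℝ)⁻¹ * ∑ i ∈ Finset.range n, ℓ (ω i) with ha
  set M : ℝ := ∑ x, |ℓ x| with hM
  have hM0 : 0 ≤ M := Finset.sum_nonneg fun x _ => abs_nonneg _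
  have hbound : ∀ n, |a n| ≤ M := by
    intro n
    rcases Nat.eq_zero_or_pos n with h0 | hn
    · simp [ha, h0, hM0]
    · have hn' : (0 : ℝ) < n := by exact_mod_cast hn
      have h1 : |∑ i ∈ Finset.range n, ℓ (ω i)| ≤ n * M := by
        calc |∑ i ∈ Finset.range n, ℓ (ω i)| ≤ ∑ i ∈ Finset.range n, |ℓ (ω i)| :=
              Finset.abs_sum_le_sum_abs _ _
          _ ≤ ∑ _i ∈ Finset.range n, M := Finset.sum_le_sum fun i _ =>
              Finset.single_le_sum (f := fun x => |ℓ x|) (fun x _ => abs_nonneg _)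
                (Finset.mem_univ _)
          _ = n * M := by rw [Finset.sum_const, Finset.card_range, nsmul_eq_mul]
      have : |a n| = (n : ℝ)⁻¹ * |∑ i ∈ Finset.range n, ℓ (ω i)| := by
        rw [ha, abs_mul, abs_inv, Nat.abs_cast]
      rw [this]
      calc (n : ℝ)⁻¹ * |∑ i ∈ Finset.range n, ℓ (ω i)| ≤ (n : ℝ)⁻¹ * (n * M) := by
            exact mul_le_mul_of_nonneg_left h1 (by positivity)
        _ = M := by field_simp
  have haM : ∀ n, a n ≤ M := fun n => (abs_le.mp (hbound n)).2
  have haM' : ∀ n, -M ≤ a n := fun n => (abs_le.mp (hbound n)).1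
  have hbdd_le : IsBoundedUnder (· ≤ ·) atTop a := isBoundedUnder_of ⟨M, haM⟩
  have hbdd_ge : IsBoundedUnder (· ≥ ·) atTop a := isBoundedUnder_of ⟨-M, haM'⟩
  have hcob_ge : IsCoboundedUnder (· ≥ ·) atTop a := hbdd_le.isCoboundedUnder_ge
  have hcob_le : IsCoboundedUnder (· ≤ ·) atTop a := hbdd_ge.isCoboundedUnder_le
  set est : ℕ → ℝ := fun n => sInf (a '' Set.Icc (κ n) n) with hest
  have hmemn : ∀ n, a n ∈ a '' Set.Icc (κ n) n := fun n => ⟨n, ⟨hκle n, le_refl n⟩, rfl⟩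
  have hbddb : ∀ n, BddBelow (a '' Set.Icc (κ n) n) := by
    intro n
    refine ⟨-M, ?_⟩
    rintro y ⟨j, _, rfl⟩
    exact haM' j
  have hest_le : ∀ n, est n ≤ a n := fun n => csInf_le (hbddb n) (hmemn n)
  have hest_ge : ∀ n, -M ≤ est n := fun n =>
    le_csInf ⟨a n, hmemn n⟩ (by rintro y ⟨j, _, rfl⟩; exact haM' j)
  have hestbdd_le : IsBoundedUnder (· ≤ ·) atTop est :=
    isBoundedUnder_of ⟨M, fun n => le_trans (hest_le n) (haM n)⟩
  have hestbdd_ge : IsBoundedUnder (· ≥ ·) atTop est := isBoundedUnder_of ⟨-M, hest_ge⟩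
  constructor
  · -- liminf est = liminf a
    refine le_antisymm (liminf_le_liminf (Eventually.of_forall hest_le)
      hestbdd_ge hcob_ge) ?_
    by_contra hcon
    push_neg at hcon
    obtain ⟨b, hb1, hb2⟩ := exists_between hcon
    have hev : ∀ᶠ j in atTop, b < a j := eventually_lt_of_lt_liminf hb2 hbdd_ge
    obtain ⟨N, hN⟩ := eventually_atTop.mp hev
    have hblim : b ≤ liminf est atTop := by
      refine le_liminf_of_le hestbdd_le.isCoboundedUnder_ge ?_
      filter_upwards [hκ.eventually_ge_atTop N] with n hn
      refine le_csInf ⟨a n, hmemn n⟩ ?_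
      rintro y ⟨j, hj, rfl⟩
      exact (hN j (le_trans hn hj.1)).le
    exact absurd (lt_of_le_of_lt hblim hb1) (lt_irrefl b)
  · -- liminf a = min expectation over cluster points
    set f : EuclideanSpace ℝ Ω → ℝ := fun p => ∑ x, ℓ x * p x with hf
    have hfa : ∀ n, a n = f (relFreq ω n) := fun n => avg_eq_expect ω ℓ n
    have hcont : Continuous f := by
      apply continuous_finset_sum
      intro x _
      exact continuous_const.mul ((EuclideanSpace.proj x).continuous)
    set L : ℝ := liminf a atTop with hL
    set S : Set (EuclideanSpace ℝ Ω) := clusterPts (relFreq ω) with hS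
    have stepA : ∀ p ∈ S, L ≤ f p := by
      intro p hp
      have hcp : MapClusterPt (f p) atTop (f ∘ relFreq ω) :=
        MapClusterPt.continuousAt_comp hcont.continuousAt hp
      refine le_of_forall_pos_le_add ?_
      intro ε hε
      have hfreq : ∃ᶠ n in atTop, a n ≤ f p + ε := by
        have := mapClusterPt_iff_frequently.mp hcp (Metric.ball (f p) ε) (Metric.ball_mem_nhds _ hε)
        refine this.mono fun n hn => ?_
        rw [Function.comp_apply, Metric.mem_ball, Real.dist_eq] at hn
        rw [hfa n]
        have := (abs_lt.mp hn).2
        linarith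
      exact liminf_le_of_frequently_le hfreq hbdd_ge
    -- cluster point realizing the liminf
    have hcl : MapClusterPt L atTop a := by
      rw [mapClusterPt_iff_frequently]
      intro s hs
      obtain ⟨ε, hε, hball⟩ := Metric.mem_nhds_iff.mp hs
      have h1 : ∀ᶠ n in atTop, L - ε < a n :=
        eventually_lt_of_lt_liminf (by rw [hL]; linarith) hbdd_ge
      have h2 : ∃ᶠ n in atTop, a n < L + ε :=
        frequently_lt_of_liminf_lt hcob_ge (by rw [hL]; linarith)
      refine (h2.and_eventually h1).mono ?_
      rintro n ⟨hn1, hn2⟩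
      apply hball
      rw [Metric.mem_ball, Real.dist_eq, abs_sub_lt_iff]
      constructor <;> linarith
    obtain ⟨φ, hφ, hφt⟩ := TopologicalSpace.FirstCountableTopology.tendsto_subseq hcl
    set R : ℝ := Real.sqrt (Fintype.card Ω) with hR
    have hrball : ∀ n, relFreq ω n ∈ Metric.closedBall (0 : EuclideanSpace ℝ Ω) R := by
      intro n
      rw [Metric.mem_closedBall, dist_zero_right, EuclideanSpace.norm_eq]
      apply Real.sqrt_le_sqrt
      calc ∑ x, ‖relFreq ω n x‖ ^ 2 ≤ ∑ _x : Ω, 1 := by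
            refine Finset.sum_le_sum fun x _ => ?_
            have h := relFreq_mem_Icc ω n x
            rw [Real.norm_eq_abs, abs_of_nonneg h.1]
            nlinarith [h.1, h.2]
        _ = Fintype.card Ω := by simp
    have hK : IsCompact (Metric.closedBall (0 : EuclideanSpace ℝ Ω) R) :=
      isCompact_closedBall _ _
    obtain ⟨p, _, ψ, hψ, hψt⟩ := hK.tendsto_subseq
      (x := fun n => relFreq ω (φ n)) (fun n => hrball (φ n))
    have hpS : p ∈ S := by
      have hφψ : Tendsto (φ ∘ ψ) atTop atTop := (hφ.comp hψ).tendsto_atTop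
      exact MapClusterPt.of_comp hφψ (Filter.Tendsto.mapClusterPt hψt)
    have hfp : f p = L := by
      have ht1 : Tendsto (fun k => a (φ (ψ k))) atTop (𝓝 (f p)) := by
        have h := (hcont.continuousAt (x := p)).tendsto.comp hψt
        refine h.congr fun k => ?_
        exact (hfa (φ (ψ k))).symm
      have ht2 : Tendsto (fun k => a (φ (ψ k))) atTop (𝓝 L) :=
        hφt.comp hψ.tendsto_atTop
      exact tendsto_nhds_unique ht1 ht2
    have hmem : L ∈ f '' S := ⟨p, hpS, hfp⟩
    refine le_antisymm (le_csInf ⟨L, hmem⟩ ?_) (csInf_le ⟨L, ?_⟩ hmem)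
    · rintro y ⟨q, hq, rfl⟩; exact stepA q hq
    · rintro y ⟨q, hq, rfl⟩; exact stepA q hq
end

section
/- Let Ω be a finite set with k := |Ω| > 1 and let A ⊆ Ω with ∅ ⊊ A ⊊ Ω. Then for every function κ : ℕ → ℕ with κ(n) → ∞ as n → ∞ and κ(n) ≤ n for all n, there exists a sequence ω = (ω_1, ω_2, …) ∈ Ω^ℕ such that the limit lim_{n→∞} min{ r_j(ω)(A) : κ(n) ≤ j ≤ n } does not exist, where r_j(ω)(A) := (1/j)·#{1 ≤ i ≤ j : ω_i ∈ A}. -/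
open MeasureTheory Filter Topology

/-- Auxiliary recursive switching times. -/
private def stmt15Times (g : ℕ → ℕ) : ℕ → ℕ
  | 0 => 1
  | k + 1 => 4 * g (2 * stmt15Times g k)

/-- For any admissible `κ` and any nontrivial event `A`, there is a data
sequence on which the Walley–Fine estimator of the relative frequency of `A` fails to
converge. -/
theorem stmt15 {Ω : Type*} [Fintype Ω] [DecidableEq Ω] (hcard : 1 < Fintype.card Ω)
    (A : Finset Ω) (hA : A.Nonempty) (hA' : A ≠ Finset.univ)
    (κ : ℕ → ℕ) (hκ : Tendsto κ atTop atTop) (hκle : ∀ n, κ n ≤ n) :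
    ∃ ω : ℕ → Ω, ¬ ∃ L : ℝ, Tendsto
      (fun n : ℕ => sInf ((fun j : ℕ => (j : ℝ)⁻¹ *
          (((Finset.range j).filter fun i => ω i ∈ A).card : ℝ)) '' Set.Icc (κ n) n))
      atTop (nhds L) := by
  classical
  obtain ⟨a, ha⟩ := hA
  obtain ⟨b, hb⟩ : ∃ b, b ∉ A := by
    by_contra h
    push_neg at h
    exact hA' (Finset.eq_univ_iff_forall.mpr h)
  -- choose a function g with t ≤ κ (g t) and t ≤ g t
  have hgex : ∀ t : ℕ, ∃ N, t ≤ κ N ∧ t ≤ N := by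
    intro t
    have := tendsto_atTop.mp hκ t
    rw [eventually_atTop] at this
    obtain ⟨N, hN⟩ := this
    exact ⟨max N t, hN _ (le_max_left _ _), le_max_right _ _⟩
  choose g hg1 hg2 using hgex
  -- switching times
  let u : ℕ → ℕ := stmt15Times g
  let v : ℕ → ℕ := fun k => g (2 * u k)
  have hu0 : u 0 = 1 := rfl
  have hstep : ∀ k, u (k + 1) = 4 * v k := fun _ => rfl
  have huv : ∀ k, 2 * u k ≤ v k := fun k => hg2 _
  have hκv : ∀ k, 2 * u k ≤ κ (v k) := fun k => hg1 _
  have hupos : ∀ k, 1 ≤ u k := by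
    intro k
    induction k with
    | zero => exact le_refl 1
    | succ k ih =>
      have := huv k
      rw [hstep k]; omega
  have hult : ∀ k, u k < v k := by
    intro k; have := huv k; have := hupos k; omega
  have humono : StrictMono u := by
    apply strictMono_nat_of_lt_succ
    intro k
    have := huv k; have := hupos k
    rw [hstep k]; omega
  have hvmono : ∀ k k', k' ≤ k → v k' ≤ v k := by
    intro k k' hk
    rcases eq_or_lt_of_le hk with rfl | hk
    · exact le_refl _
    · have h1 : u (k' + 1) ≤ u k := humono.monotone hk
      have h2 : v k' ≤ u (k' + 1) := by rw [hstep k']; omega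
      exact le_trans h2 (le_trans h1 (hult k).le)
  have huk : ∀ k, k + 1 ≤ u k := by
    intro k
    induction k with
    | zero => exact le_refl 1
    | succ k ih =>
      have := huv k
      rw [hstep k]; omega
  -- the sequence
  set ω : ℕ → Ω := fun j => if ∃ k, u k ≤ j ∧ j < v k then a else b with hω
  have hωA : ∀ j, ω j ∈ A ↔ ∃ k, u k ≤ j ∧ j < v k := by
    intro j
    by_cases h : ∃ k, u k ≤ j ∧ j < v k
    · simp [hω, h, ha]
    · simp [hω, h, hb]
  refine ⟨ω, ?_⟩
  rintro ⟨L, hL⟩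
  set c : ℕ → ℕ := fun j => ((Finset.range j).filter fun i => ω i ∈ A).card with hc
  set F : ℕ → ℝ := fun j => (j : ℝ)⁻¹ * (c j : ℝ) with hF
  set f : ℕ → ℝ := fun n => sInf (F '' Set.Icc (κ n) n) with hf
  have hLf : Tendsto f atTop (nhds L) := hL
  -- count lower bound in true phase
  have hclow : ∀ k j, u k ≤ j → j ≤ v k → j - u k ≤ c j := by
    intro k j h1 h2
    calc j - u k = (Finset.Ico (u k) j).card := (Nat.card_Ico _ _).symm
      _ ≤ c j := by
        apply Finset.card_le_card
        intro i hi
        rw [Finset.mem_Ico] at hi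
        rw [Finset.mem_filter, Finset.mem_range]
        exact ⟨hi.2, (hωA i).mpr ⟨k, hi.1, lt_of_lt_of_le hi.2 h2⟩⟩
  -- count upper bound after false phase
  have hchigh : ∀ k, c (4 * v k) ≤ v k := by
    intro k
    have heq : ((Finset.range (4 * v k)).filter fun i => ω i ∈ A) =
        ((Finset.range (v k)).filter fun i => ω i ∈ A) := by
      ext i
      simp only [Finset.mem_filter, Finset.mem_range]
      constructor
      · rintro ⟨hi, hQ⟩
        refine ⟨?_, hQ⟩
        by_contra hvi
        push_neg at hvi
        obtain ⟨k', h1, h2⟩ := (hωA i).mp hQ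
        rcases le_or_gt k' k with hk | hk
        · exact absurd (lt_of_lt_of_le h2 (hvmono k k' hk)) (not_lt.mpr hvi)
        · have : u (k + 1) ≤ u k' := humono.monotone hk
          rw [hstep k] at this
          omega
      · rintro ⟨hi, hQ⟩
        have := hupos k
        exact ⟨by omega, hQ⟩
    calc c (4 * v k) = ((Finset.range (v k)).filter fun i => ω i ∈ A).card :=
          congrArg Finset.card heq
      _ ≤ (Finset.range (v k)).card := Finset.card_filter_le _ _
      _ = v k := Finset.card_range _
  -- F is nonneg, so sets are bounded below
  have hF0 : ∀ j, (0 : ℝ) ≤ F j := by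
    intro j
    apply mul_nonneg (by positivity) (by positivity)
  have hbdd : ∀ n, BddBelow (F '' Set.Icc (κ n) n) := by
    intro n
    exact ⟨0, by rintro x ⟨j, _, rfl⟩; exact hF0 j⟩
  -- lower bound at times v k
  have hhalf : ∀ k, (1 / 2 : ℝ) ≤ f (v k) := by
    intro k
    apply le_csInf
    · exact ⟨F (v k), ⟨v k, Set.mem_Icc.mpr ⟨hκle _, le_refl _⟩, rfl⟩⟩
    rintro x ⟨j, hj, rfl⟩
    rw [Set.mem_Icc] at hj
    have hj2 : 2 * u k ≤ j := le_trans (hκv k) hj.1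
    have hjv : j ≤ v k := hj.2
    have hu1 := hupos k
    have hjpos : 0 < j := by omega
    have hcount : j - u k ≤ c j := hclow k j (by omega) hjv
    have hcr : (j : ℝ) - (u k : ℝ) ≤ (c j : ℝ) := by
      have : ((j - u k : ℕ) : ℝ) ≤ (c j : ℝ) := Nat.cast_le.mpr hcount
      rwa [Nat.cast_sub (by omega)] at this
    have h2u : (2 : ℝ) * (u k : ℝ) ≤ (j : ℝ) := by exact_mod_cast hj2
    have hjr : (0 : ℝ) < j := by exact_mod_cast hjpos
    show (1 / 2 : ℝ) ≤ (j : ℝ)⁻¹ * (c j : ℝ)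
    rw [inv_mul_eq_div, le_div_iff₀ hjr]
    linarith
  -- upper bound at times 4 * v k
  have hquarter : ∀ k, f (4 * v k) ≤ 1 / 4 := by
    intro k
    have hv1 : 1 ≤ v k := le_trans (hupos k) (hult k).le
    have hmem : F (4 * v k) ∈ F '' Set.Icc (κ (4 * v k)) (4 * v k) :=
      ⟨4 * v k, Set.mem_Icc.mpr ⟨hκle _, le_refl _⟩, rfl⟩
    have h1 : f (4 * v k) ≤ F (4 * v k) := csInf_le (hbdd _) hmem
    have h2 : F (4 * v k) ≤ 1 / 4 := by
      have hcb : (c (4 * v k) : ℝ) ≤ (v k : ℝ) := Nat.cast_le.mpr (hchigh k)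
      have hvr : (0 : ℝ) < v k := by exact_mod_cast hv1
      show ((4 * v k : ℕ) : ℝ)⁻¹ * (c (4 * v k) : ℝ) ≤ 1 / 4
      rw [inv_mul_eq_div, div_le_iff₀ (by positivity)]
      push_cast
      linarith
    linarith
  -- subsequence limits
  have hvtend : Tendsto v atTop atTop := by
    apply tendsto_atTop_mono (fun k => ?_) tendsto_id
    have := huk k; have := hult k
    simp only [id]; omega
  have h4vtend : Tendsto (fun k => 4 * v k) atTop atTop := by
    apply tendsto_atTop_mono (fun k => ?_) hvtend
    have := hupos k; have := hult k; omega
  have hT1 : Tendsto (fun k => f (v k)) atTop (nhds L) := hLf.comp hvtend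
  have hT2 : Tendsto (fun k => f (4 * v k)) atTop (nhds L) := hLf.comp h4vtend
  have hL1 : (1 / 2 : ℝ) ≤ L := ge_of_tendsto' hT1 hhalf
  have hL2 : L ≤ 1 / 4 := le_of_tendsto' hT2 hquarter
  linarith
end
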